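/- Let a b-specification be given whose induced geometric tree is regular, and define the lookup functions from the geometry: N(j, s, 𝓘) := j' if there exists a word v with σ(v) = s such that v·j' is a geometric neighbor of v·j at 𝓘, and ⊥ otherwise; F^p(j, s, 𝓘) := 𝓙 and Ω(j, s, s', 𝓘) := j' if there exist words v, v' with σ(v) = s, σ(v') = s', v' a geometric neighbor of v at 𝓙, and v'·j' a geometric neighbor of v·j at 𝓘, and ⊥ otherwise (these are well-defined by regularity). Define algebraic neighborship inductively: for nonempty words x, y of equal length, y is a depth-1 𝓘-neighbor of x if N(last(x), σ(parent(x)), 𝓘) = last(y) ≠ ⊥ and parent(y) = parent(x); for k ≥ 2, y is a depth-k 𝓘-neighbor of x if N(last(x), σ(parent(x)), 𝓘) = ⊥, 𝓙 := F^p(last(x), σ(parent(x)), 𝓘) ≠ ⊥, parent(y) is a depth-(k−1) 𝓙-neighbor of parent(x), and last(y) = Ω(last(x), σ(parent(x)), σ(parent(y)), 𝓘); y is an 𝓘-neighbor of x if it is a depth-k 𝓘-neighbor for some k ≥ 1. Then for all words x, y and every facet index set 𝓘: y is a geometric neighbor of x at 𝓘 if and only if y is an 𝓘-neighbor of x in the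 algebraic sense. -/

import Mathlib

open Matrix BigOperators

/-- A `b`-specification in dimension `d`: states `S` with root state `sr` and
child-state map `Sc` (every state reachable from `sr`), vertex counts `n s ≥ 1`,
a root point matrix `Qr`, and transition matrices `M s j` (all column sums 1). -/
structure BSpec (d b : ℕ) (S : Type) where
  sr : S
  Sc : S → Fin b → S
  reach : ∀ s : S, ∃ w : List (Fin b), w.foldl Sc sr = s
  n : S → ℕ
  n_pos : ∀ s : S, 1 ≤ n s
  Qr : Matrix (Fin d) (Fin (n sr)) ℝ
  M : (s : S) → (j : Fin b) → Matrix (Fin (n s)) (Fin (n (Sc s j))) ℝ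
  M_trans : ∀ (s : S) (j : Fin b) (col : Fin (n (Sc s j))), ∑ i, M s j i col = 1

namespace BSpec

variable {d b : ℕ} {S : Type}

/-- The state `σ(w)` of the tree node given by the word `w` (digits read left to right,
`σ(ε) = s_r`, `σ(w·j) = S^c(σ(w), j)`). -/
def st (sp : BSpec d b S) (w : List (Fin b)) : S :=
  w.foldl sp.Sc sp.sr

/-- Helper for the point matrices: fold the transition matrices along a word. -/
def Qfrom (sp : BSpec d b S) :
    (s : S) → (w : List (Fin b)) → Matrix (Fin d) (Fin (sp.n s)) ℝ →
      Matrix (Fin d) (Fin (sp.n (w.foldl sp.Sc s))) ℝ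
  | _, [], Q => Q
  | s, j :: w, Q => sp.Qfrom (sp.Sc s j) w (Q * sp.M s j)

/-- The point matrix `Q(w)` of the tree node given by the word `w`
(`Q(ε) = Q^r`, `Q(w·j) = Q(w)·M^{σ(w),j}`). -/
def Qm (sp : BSpec d b S) (w : List (Fin b)) :
    Matrix (Fin d) (Fin (sp.n (sp.st w))) ℝ :=
  sp.Qfrom sp.sr w sp.Qr

end BSpec

/-- The `i`-th column of a matrix, as a point of `ℝ^d`. -/
def colFun {d m : ℕ} (Q : Matrix (Fin d) (Fin m) ℝ) (i : Fin m) : Fin d → ℝ :=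
  fun r => Q r i

/-- The convex hull of the columns of `Q`. -/
def convOf {d m : ℕ} (Q : Matrix (Fin d) (Fin m) ℝ) : Set (Fin d → ℝ) :=
  convexHull ℝ (Set.range (colFun Q))

/-- A face of a polytope `P`: the intersection of `P` with a supporting hyperplane. -/
def IsFace {d : ℕ} (P F : Set (Fin d → ℝ)) : Prop :=
  ∃ (c : Fin d → ℝ) (c₀ : ℝ), (∀ x ∈ P, c ⬝ᵥ x ≤ c₀) ∧ F = {x ∈ P | c ⬝ᵥ x = c₀}

open Classical in
/-- The dimension of a subset of `ℝ^d`: the dimension of its affine span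
(with the convention that the empty set has dimension `-1`). -/
noncomputable def setDim {d : ℕ} (s : Set (Fin d → ℝ)) : ℤ :=
  if s = ∅ then -1 else (Module.finrank ℝ (affineSpan ℝ s).direction : ℤ)

/-- A facet of a polytope `P`: a face of dimension `dim P - 1`. -/
def IsFacet {d : ℕ} (P F : Set (Fin d → ℝ)) : Prop :=
  IsFace P F ∧ setDim F = setDim P - 1

/-- The family of index sets (as subsets of `ℕ`) of facets of `conv(Q)`. -/
def idxFacets {d m : ℕ} (Q : Matrix (Fin d) (Fin m) ℝ) : Set (Set ℕ) :=
  {I | ∃ F : Set (Fin d → ℝ), IsFacet (convOf Q) F ∧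
    I = {i : ℕ | ∃ h : i < m, colFun Q ⟨i, h⟩ ∈ F}}

/-- The convex hull of the columns of `Q` whose index lies in `I`. -/
def facetOfIdx {d m : ℕ} (Q : Matrix (Fin d) (Fin m) ℝ) (I : Set ℕ) :
    Set (Fin d → ℝ) :=
  convexHull ℝ {x | ∃ i : Fin m, (i : ℕ) ∈ I ∧ x = colFun Q i}

/-- `τ : Q ∼ Q'`: the matrices have the same number of columns and the invertible
affine map `τ` carries the `i`-th column of `Q` to the `i`-th column of `Q'`. -/
def SimBy {d m m' : ℕ} (τ : (Fin d → ℝ) ≃ᵃ[ℝ] (Fin d → ℝ))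
    (Q : Matrix (Fin d) (Fin m) ℝ) (Q' : Matrix (Fin d) (Fin m') ℝ) : Prop :=
  m = m' ∧ ∀ (i : ℕ) (h : i < m) (h' : i < m'),
    colFun Q' ⟨i, h'⟩ = τ (colFun Q ⟨i, h⟩)

/-- `Q ∼ Q'`: some invertible affine map carries the columns of `Q` to those of `Q'`. -/
def Sim {d m m' : ℕ} (Q : Matrix (Fin d) (Fin m) ℝ)
    (Q' : Matrix (Fin d) (Fin m') ℝ) : Prop :=
  ∃ τ : (Fin d → ℝ) ≃ᵃ[ℝ] (Fin d → ℝ), SimBy τ Q Q'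

namespace BSpec

variable {d b : ℕ} {S : Type}

/-- `v'` is a geometric neighbor of `v` at the facet index set `I`:
`v` and `v'` are words of equal positive length, `I ∈ indexFacets(Q(v))`,
`conv(Q(v)) ∩ conv(Q(v'))` equals the facet of `conv(Q(v))` spanned by the
columns indexed by `I`, and this intersection is also a facet of `conv(Q(v'))`. -/
def GeomNbr (sp : BSpec d b S) (v v' : List (Fin b)) (I : Set ℕ) : Prop :=
  v.length = v'.length ∧ v ≠ [] ∧
  I ∈ idxFacets (sp.Qm v) ∧
  convOf (sp.Qm v) ∩ convOf (sp.Qm v') = facetOfIdx (sp.Qm v) I ∧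
  IsFacet (convOf (sp.Qm v')) (convOf (sp.Qm v) ∩ convOf (sp.Qm v'))

/-- Pre-regularity: (P1) equal states give affinely equivalent point matrices;
(P2) every node polytope is full-dimensional. -/
def PreRegular (sp : BSpec d b S) : Prop :=
  (∀ w w' : List (Fin b), sp.st w = sp.st w' → Sim (sp.Qm w) (sp.Qm w')) ∧
  (∀ w : List (Fin b), setDim (convOf (sp.Qm w)) = (d : ℤ))

/-- Regularity: pre-regularity together with (R1), (R2) and (R3). -/
def Regular (sp : BSpec d b S) : Prop :=
  sp.PreRegular ∧
  -- (R1)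
  (∀ (v₁ v₂ v₁' v₂' : List (Fin b)) (I : Set ℕ),
    sp.GeomNbr v₁ v₂ I → sp.GeomNbr v₁' v₂' I →
    sp.st v₁ = sp.st v₁' → sp.st v₂ = sp.st v₂' →
    ∃ τ : (Fin d → ℝ) ≃ᵃ[ℝ] (Fin d → ℝ),
      SimBy τ (sp.Qm v₁) (sp.Qm v₁') ∧ SimBy τ (sp.Qm v₂) (sp.Qm v₂')) ∧
  -- (R2)
  (∀ (w : List (Fin b)) (j : Fin b),
    convOf (sp.Qm (w ++ [j])) ⊆ convOf (sp.Qm w)) ∧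
  -- (R3)
  (∀ v v' : List (Fin b), v.length = v'.length →
    (setDim (convOf (sp.Qm v) ∩ convOf (sp.Qm v')) = (d : ℤ) → v = v') ∧
    (setDim (convOf (sp.Qm v) ∩ convOf (sp.Qm v')) = (d : ℤ) - 1 →
      ∃ I ∈ idxFacets (sp.Qm v), sp.GeomNbr v v' I))

end BSpec

namespace BSpec

variable {d b : ℕ} {S : Type}

open Classical in
/-- The lookup function `N(j, s, 𝓘)`, defined from the geometry. -/
noncomputable def Nlook (sp : BSpec d b S) (j : Fin b) (s : S) (I : Set ℕ) :
    Option (Fin b) :=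
  if h : ∃ j' : Fin b, ∃ v : List (Fin b),
      sp.st v = s ∧ sp.GeomNbr (v ++ [j]) (v ++ [j']) I
  then some h.choose else none

open Classical in
/-- The lookup function `F^p(j, s, 𝓘)`, defined from the geometry. -/
noncomputable def Fplook (sp : BSpec d b S) (j : Fin b) (s : S) (I : Set ℕ) :
    Option (Set ℕ) :=
  if h : ∃ J : Set ℕ, ∃ (v v' : List (Fin b)) (j' : Fin b),
      sp.st v = s ∧ sp.GeomNbr v v' J ∧ sp.GeomNbr (v ++ [j]) (v' ++ [j']) I
  then some h.choose else none

open Classical in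
/-- The lookup function `Ω(j, s, s', 𝓘)`, defined from the geometry. -/
noncomputable def Omlook (sp : BSpec d b S) (j : Fin b) (s s' : S) (I : Set ℕ) :
    Option (Fin b) :=
  if h : ∃ j' : Fin b, ∃ (v v' : List (Fin b)) (J : Set ℕ),
      sp.st v = s ∧ sp.st v' = s' ∧ sp.GeomNbr v v' J ∧
      sp.GeomNbr (v ++ [j]) (v' ++ [j']) I
  then some h.choose else none

/-- Algebraic depth-`k` `𝓘`-neighborship of words, defined inductively from
the lookup functions. -/
noncomputable def AlgNbr (sp : BSpec d b S) :
    ℕ → Set ℕ → List (Fin b) → List (Fin b) → Prop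
  | 0, _, _, _ => False
  | 1, I, x, y =>
      ∃ jx jy : Fin b, x.getLast? = some jx ∧ y.getLast? = some jy ∧
        y.dropLast = x.dropLast ∧
        sp.Nlook jx (sp.st x.dropLast) I = some jy
  | (k + 2), I, x, y =>
      ∃ jx jy : Fin b, x.getLast? = some jx ∧ y.getLast? = some jy ∧
        sp.Nlook jx (sp.st x.dropLast) I = none ∧
        ∃ J : Set ℕ, sp.Fplook jx (sp.st x.dropLast) I = some J ∧
          sp.AlgNbr (k + 1) J x.dropLast y.dropLast ∧
          sp.Omlook jx (sp.st x.dropLast) (sp.st y.dropLast) I = some jy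

end BSpec

section Aux

open Set

lemma colFun_heq {d m m' : ℕ} (h : m = m') {Q : Matrix (Fin d) (Fin m) ℝ}
    {Q' : Matrix (Fin d) (Fin m') ℝ} (hq : HEq Q Q') (i : ℕ) (hi : i < m) (hi' : i < m') :
    colFun Q ⟨i, hi⟩ = colFun Q' ⟨i, hi'⟩ := by
  subst h; cases hq; rfl

/-- An affine map applied to an affine combination (in a vector space, Fin-indexed). -/
lemma affine_map_comb {d : ℕ} (τ : (Fin d → ℝ) →ᵃ[ℝ] (Fin d → ℝ)) {m : ℕ}
    (p : Fin m → (Fin d → ℝ)) (μ : Fin m → ℝ) (hμ : ∑ k, μ k = 1) :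
    τ (∑ k, μ k • p k) = ∑ k, μ k • τ (p k) := by
  have h1 := Finset.univ.affineCombination_eq_linear_combination p μ hμ
  have h2 := Finset.univ.affineCombination_eq_linear_combination (fun k => τ (p k)) μ hμ
  have h3 := Finset.univ.map_affineCombination p μ hμ τ
  rw [← h1, h3, ← h2]
  rfl

namespace BSpec

variable {d b : ℕ} {S : Type}

lemma st_append (sp : BSpec d b S) (v w : List (Fin b)) :
    sp.st (v ++ w) = w.foldl sp.Sc (sp.st v) := by
  simp [st, List.foldl_append]

lemma st_append_single (sp : BSpec d b S) (v : List (Fin b)) (j : Fin b) :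
    sp.st (v ++ [j]) = sp.Sc (sp.st v) j := by
  simp [st_append]

lemma qfrom_append (sp : BSpec d b S) (w : List (Fin b)) (j : Fin b) :
    ∀ (s : S) (Q : Matrix (Fin d) (Fin (sp.n s)) ℝ),
      HEq (sp.Qfrom s (w ++ [j]) Q)
        (sp.Qfrom s w Q * sp.M (w.foldl sp.Sc s) j) := by
  induction w with
  | nil => intro s Q; rfl
  | cons a w ih =>
      intro s Q
      exact ih (sp.Sc s a) (Q * sp.M s a)

lemma n_child_eq {sp : BSpec d b S} {v w : List (Fin b)} (h : sp.st v = sp.st w)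
    (j : Fin b) : sp.n (sp.st (v ++ [j])) = sp.n (sp.st (w ++ [j])) := by
  rw [sp.st_append_single, sp.st_append_single, h]

lemma col_child (sp : BSpec d b S) (v : List (Fin b)) (j : Fin b) (i : ℕ)
    (hi : i < sp.n (sp.st (v ++ [j]))) (hi' : i < sp.n (sp.Sc (sp.st v) j)) :
    colFun (sp.Qm (v ++ [j])) ⟨i, hi⟩ =
      ∑ k, (sp.M (sp.st v) j k ⟨i, hi'⟩) • colFun (sp.Qm v) k := by
  have h := sp.qfrom_append v j sp.sr sp.Qr
  have hm : sp.n (sp.st (v ++ [j])) = sp.n (sp.Sc (sp.st v) j) := by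
    rw [sp.st_append_single]
  have hcol := colFun_heq hm h i hi hi'
  rw [Qm, hcol]
  funext r
  simp [colFun, Matrix.mul_apply, Finset.sum_apply, mul_comm]
  rfl

end BSpec
end Aux
section Aux2
open Set

variable {d : ℕ}

lemma setDim_mono {s t : Set (Fin d → ℝ)} (h : s ⊆ t) : setDim s ≤ setDim t := by
  unfold setDim
  by_cases hs : s = ∅
  · rw [if_pos hs]; split_ifs <;> omega
  · have ht : t ≠ ∅ := fun hte => hs (Set.subset_eq_empty h hte)
    rw [if_neg hs, if_neg ht]
    have hle : (affineSpan ℝ s).direction ≤ (affineSpan ℝ t).direction :=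
      AffineSubspace.direction_le (affineSpan_mono ℝ h)
    exact_mod_cast Submodule.finrank_mono hle

lemma setDim_le_d (s : Set (Fin d → ℝ)) : setDim s ≤ (d : ℤ) := by
  unfold setDim
  split
  · omega
  · have := Submodule.finrank_le (affineSpan ℝ s).direction
    simpa using (by exact_mod_cast this : ((Module.finrank ℝ (affineSpan ℝ s).direction : ℤ)) ≤ ((Module.finrank ℝ (Fin d → ℝ) : ℤ)))

lemma setDim_image (τ : (Fin d → ℝ) ≃ᵃ[ℝ] (Fin d → ℝ)) (s : Set (Fin d → ℝ)) :
    setDim (⇑τ '' s) = setDim s := by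
  unfold setDim
  have himg : (⇑τ '' s = ∅) ↔ (s = ∅) := by
    simp [Set.image_eq_empty]
  by_cases hs : s = ∅
  · simp [hs]
  · rw [if_neg (by simpa [himg]), if_neg hs]
    have hspan : affineSpan ℝ (⇑τ '' s) = (affineSpan ℝ s).map τ.toAffineMap := by
      rw [AffineSubspace.map_span]
      rfl
    rw [hspan, AffineSubspace.map_direction]
    norm_cast
    exact LinearEquiv.finrank_map_eq τ.linear _

lemma dot_affine_decomp (τ : (Fin d → ℝ) ≃ᵃ[ℝ] (Fin d → ℝ)) (c : Fin d → ℝ) :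
    ∃ c' : Fin d → ℝ, ∃ k : ℝ, ∀ y : Fin d → ℝ, c ⬝ᵥ (τ.symm y) = c' ⬝ᵥ y + k := by
  set φ : (Fin d → ℝ) →ₗ[ℝ] ℝ :=
    { toFun := fun y => c ⬝ᵥ (τ.symm.linear y)
      map_add' := by intro a b; simp [dotProduct_add]
      map_smul' := by intro r a; simp [dotProduct_smul] }
  refine ⟨fun r => φ (Pi.single r 1), c ⬝ᵥ (τ.symm 0), fun y => ?_⟩
  have hdec : τ.symm y = τ.symm.linear y + τ.symm 0 := by
    have h0 := AffineMap.map_vadd (τ.symm.toAffineMap) 0 y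
    simpa [vadd_eq_add] using h0
  rw [hdec, dotProduct_add]
  congr 1
  have hphi : c ⬝ᵥ τ.symm.linear y = φ y := rfl
  rw [hphi, LinearMap.pi_apply_eq_sum_univ φ y]
  simp only [dotProduct]
  refine Finset.sum_congr rfl fun i _ => ?_
  rw [smul_eq_mul, mul_comm]
  congr 2
  funext j
  simp [Pi.single_apply, eq_comm]

lemma IsFace.image {P F : Set (Fin d → ℝ)} (τ : (Fin d → ℝ) ≃ᵃ[ℝ] (Fin d → ℝ))
    (h : IsFace P F) : IsFace (⇑τ '' P) (⇑τ '' F) := by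
  obtain ⟨c, c0, hle, hF⟩ := h
  obtain ⟨c', k, hck⟩ := dot_affine_decomp τ c
  refine ⟨c', c0 - k, ?_, ?_⟩
  · rintro y ⟨x, hx, rfl⟩
    have := hle x hx
    have h2 := hck (τ x)
    rw [AffineEquiv.symm_apply_apply] at h2
    linarith
  · ext y
    constructor
    · rintro ⟨x, hx, rfl⟩
      rw [hF] at hx
      obtain ⟨hxP, hxc⟩ := hx
      have h2 := hck (τ x)
      rw [AffineEquiv.symm_apply_apply] at h2
      exact ⟨⟨x, hxP, rfl⟩, by linarith⟩
    · rintro ⟨⟨x, hxP, rfl⟩, hyc⟩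
      have h2 := hck (τ x)
      rw [AffineEquiv.symm_apply_apply] at h2
      refine ⟨x, ?_, rfl⟩
      rw [hF]
      exact ⟨hxP, by linarith⟩

lemma IsFacet.image {P F : Set (Fin d → ℝ)} (τ : (Fin d → ℝ) ≃ᵃ[ℝ] (Fin d → ℝ))
    (h : IsFacet P F) : IsFacet (⇑τ '' P) (⇑τ '' F) :=
  ⟨h.1.image τ, by rw [setDim_image, setDim_image, h.2]⟩

lemma convOf_sim {m m' : ℕ} {τ : (Fin d → ℝ) ≃ᵃ[ℝ] (Fin d → ℝ)}
    {Q : Matrix (Fin d) (Fin m) ℝ} {Q' : Matrix (Fin d) (Fin m') ℝ}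
    (h : SimBy τ Q Q') : convOf Q' = ⇑τ '' convOf Q := by
  obtain ⟨hm, hcol⟩ := h
  have hrange : Set.range (colFun Q') = ⇑τ '' Set.range (colFun Q) := by
    ext x
    constructor
    · rintro ⟨i, rfl⟩
      exact ⟨colFun Q ⟨i, hm ▸ i.isLt⟩, ⟨_, rfl⟩, (hcol i (hm ▸ i.isLt) i.isLt).symm⟩
    · rintro ⟨x, ⟨i, rfl⟩, rfl⟩
      exact ⟨⟨i, hm ▸ i.isLt⟩, (hcol i i.isLt (hm ▸ i.isLt)).symm ▸ rfl⟩
  unfold convOf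
  rw [hrange]
  have h2 := (AffineMap.image_convexHull τ.toAffineMap (Set.range (colFun Q))).symm
  simpa using h2

lemma SimBy.symm {m m' : ℕ} {τ : (Fin d → ℝ) ≃ᵃ[ℝ] (Fin d → ℝ)}
    {Q : Matrix (Fin d) (Fin m) ℝ} {Q' : Matrix (Fin d) (Fin m') ℝ}
    (h : SimBy τ Q Q') : SimBy τ.symm Q' Q := by
  obtain ⟨hm, hcol⟩ := h
  refine ⟨hm.symm, fun i hi hi' => ?_⟩
  rw [hcol i hi' hi]
  simp

lemma facetOfIdx_sim {m m' : ℕ} {τ : (Fin d → ℝ) ≃ᵃ[ℝ] (Fin d → ℝ)}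
    {Q : Matrix (Fin d) (Fin m) ℝ} {Q' : Matrix (Fin d) (Fin m') ℝ}
    (h : SimBy τ Q Q') (I : Set ℕ) : facetOfIdx Q' I = ⇑τ '' facetOfIdx Q I := by
  obtain ⟨hm, hcol⟩ := h
  have hbase : {x | ∃ i : Fin m', (i : ℕ) ∈ I ∧ x = colFun Q' i}
      = ⇑τ '' {x | ∃ i : Fin m, (i : ℕ) ∈ I ∧ x = colFun Q i} := by
    ext x
    constructor
    · rintro ⟨i, hiI, rfl⟩
      exact ⟨colFun Q ⟨i, hm ▸ i.isLt⟩, ⟨⟨i, hm ▸ i.isLt⟩, hiI, rfl⟩,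
        (hcol i (hm ▸ i.isLt) i.isLt).symm⟩
    · rintro ⟨x, ⟨i, hiI, rfl⟩, rfl⟩
      exact ⟨⟨i, hm ▸ i.isLt⟩, hiI, (hcol i i.isLt (hm ▸ i.isLt)).symm⟩
  unfold facetOfIdx
  rw [hbase]
  have h2 := (AffineMap.image_convexHull τ.toAffineMap
    {x | ∃ i : Fin m, (i : ℕ) ∈ I ∧ x = colFun Q i}).symm
  simpa using h2

lemma idxFacets_sim {m m' : ℕ} {τ : (Fin d → ℝ) ≃ᵃ[ℝ] (Fin d → ℝ)}
    {Q : Matrix (Fin d) (Fin m) ℝ} {Q' : Matrix (Fin d) (Fin m') ℝ}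
    (h : SimBy τ Q Q') : idxFacets Q' = idxFacets Q := by
  have key : ∀ {mm mm' : ℕ} {σ : (Fin d → ℝ) ≃ᵃ[ℝ] (Fin d → ℝ)}
      {R : Matrix (Fin d) (Fin mm) ℝ} {R' : Matrix (Fin d) (Fin mm') ℝ},
      SimBy σ R R' → idxFacets R ⊆ idxFacets R' := by
    intro mm mm' σ R R' hs I hI
    obtain ⟨F, hF, hIdef⟩ := hI
    refine ⟨⇑σ '' F, ?_, ?_⟩
    · rw [convOf_sim hs]; exact hF.image σ
    · rw [hIdef]
      ext i
      simp only [Set.mem_setOf_eq]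
      constructor
      · rintro ⟨hilt, hin⟩
        exact ⟨hs.1 ▸ hilt, ⟨colFun R ⟨i, hilt⟩, hin, (hs.2 i hilt (hs.1 ▸ hilt)).symm⟩⟩
      · rintro ⟨hilt, x, hxF, hx⟩
        refine ⟨hs.1 ▸ hilt, ?_⟩
        have := hs.2 i (hs.1 ▸ hilt) hilt
        rw [this] at hx
        have hxx : x = colFun R ⟨i, hs.1 ▸ hilt⟩ := σ.injective hx
        rwa [← hxx]
  exact le_antisymm (key h.symm) (key h)

end Aux2
section Aux3
namespace BSpec
variable {d b : ℕ} {S : Type}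

lemma sum_state_eq {sp : BSpec d b S} {s s' : S} (hss : s = s') (j : Fin b)
    (i : ℕ) (hi : i < sp.n (sp.Sc s j)) (hi' : i < sp.n (sp.Sc s' j))
    (p : Fin (sp.n s) → (Fin d → ℝ)) (p' : Fin (sp.n s') → (Fin d → ℝ))
    (hp : ∀ (k : ℕ) (hk : k < sp.n s) (hk' : k < sp.n s'), p ⟨k, hk⟩ = p' ⟨k, hk'⟩) :
    ∑ k, sp.M s j k ⟨i, hi⟩ • p k = ∑ k, sp.M s' j k ⟨i, hi'⟩ • p' k := by
  subst hss
  have hpp : p = p' := funext fun k => hp k k.isLt k.isLt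
  subst hpp
  rfl

lemma simby_child {sp : BSpec d b S} {v w : List (Fin b)} (hst : sp.st v = sp.st w)
    {τ : (Fin d → ℝ) ≃ᵃ[ℝ] (Fin d → ℝ)} (hτ : SimBy τ (sp.Qm v) (sp.Qm w)) (j : Fin b) :
    SimBy τ (sp.Qm (v ++ [j])) (sp.Qm (w ++ [j])) := by
  have hn := n_child_eq hst j
  refine ⟨hn, fun i hi hi' => ?_⟩
  have hiv : i < sp.n (sp.Sc (sp.st v) j) := by rw [← sp.st_append_single]; exact hi
  have hiw : i < sp.n (sp.Sc (sp.st w) j) := by rw [← sp.st_append_single]; exact hi'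
  rw [sp.col_child v j i hi hiv, sp.col_child w j i hi' hiw]
  have hsum : ∑ k, sp.M (sp.st v) j k ⟨i, hiv⟩ = 1 := sp.M_trans _ j _
  have hmap : τ (∑ k, sp.M (sp.st v) j k ⟨i, hiv⟩ • colFun (sp.Qm v) k)
      = ∑ k, sp.M (sp.st v) j k ⟨i, hiv⟩ • τ (colFun (sp.Qm v) k) := by
    have h := affine_map_comb τ.toAffineMap (fun k => colFun (sp.Qm v) k) _ hsum
    simpa using h
  rw [hmap]
  exact (sum_state_eq hst j i hiv hiw _ _ (fun k hk hk' => (hτ.2 k hk hk').symm)).symm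

lemma geom_transfer {sp : BSpec d b S} {v₁ v₂ w₁ w₂ : List (Fin b)} {I : Set ℕ}
    {τ : (Fin d → ℝ) ≃ᵃ[ℝ] (Fin d → ℝ)}
    (h1 : SimBy τ (sp.Qm v₁) (sp.Qm w₁)) (h2 : SimBy τ (sp.Qm v₂) (sp.Qm w₂))
    (hlen : w₁.length = w₂.length) (hne : w₁ ≠ [])
    (hg : sp.GeomNbr v₁ v₂ I) : sp.GeomNbr w₁ w₂ I := by
  obtain ⟨-, -, hI, hint, hfac⟩ := hg
  refine ⟨hlen, hne, ?_, ?_, ?_⟩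
  · rwa [idxFacets_sim h1]
  · rw [convOf_sim h1, convOf_sim h2, ← Set.image_inter τ.injective, hint,
      facetOfIdx_sim h1]
  · rw [convOf_sim h1, convOf_sim h2, ← Set.image_inter τ.injective]
    exact hfac.image τ

/-- Transfer of sibling geometric neighborship along equal states (uses (P1)). -/
lemma sibling_transfer {sp : BSpec d b S} (hpre : sp.PreRegular) {v w : List (Fin b)}
    (hst : sp.st v = sp.st w) {j j' : Fin b} {I : Set ℕ}
    (hg : sp.GeomNbr (v ++ [j]) (v ++ [j']) I) :
    sp.GeomNbr (w ++ [j]) (w ++ [j']) I := by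
  obtain ⟨τ, hτ⟩ := hpre.1 v w hst
  exact geom_transfer (simby_child hst hτ j) (simby_child hst hτ j')
    (by simp) (by simp) hg

end BSpec
end Aux3
section Aux4
open Set

variable {d : ℕ}

/-- Dot product with `c` as a linear functional. -/
def dotL (c : Fin d → ℝ) : (Fin d → ℝ) →ₗ[ℝ] ℝ where
  toFun x := c ⬝ᵥ x
  map_add' x y := by simp [dotProduct_add]
  map_smul' r x := by simp [dotProduct_smul]

@[simp] lemma dotL_apply (c x : Fin d → ℝ) : dotL c x = c ⬝ᵥ x := rfl

lemma setDim_of_ne {s : Set (Fin d → ℝ)} (hs : s ≠ ∅) :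
    setDim s = (Module.finrank ℝ (affineSpan ℝ s).direction : ℤ) := by
  simp [setDim, hs]

lemma nonempty_of_setDim {s : Set (Fin d → ℝ)} (h : 0 ≤ setDim s) : s.Nonempty := by
  rw [Set.nonempty_iff_ne_empty]
  intro he
  rw [he] at h
  simp [setDim] at h

lemma finrank_of_setDim {s : Set (Fin d → ℝ)} {k : ℕ} (h : setDim s = (k : ℤ)) :
    Module.finrank ℝ (affineSpan ℝ s).direction = k := by
  have hne : s ≠ ∅ := Set.nonempty_iff_ne_empty.mp
    (nonempty_of_setDim (by rw [h]; exact Int.natCast_nonneg k))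
  rw [setDim_of_ne hne] at h
  exact_mod_cast h

lemma range_dotL_eq_top {c : Fin d → ℝ} (hc : c ≠ 0) :
    LinearMap.range (dotL c) = ⊤ := by
  obtain ⟨r, hr⟩ : ∃ r, c r ≠ 0 := by
    by_contra h
    push_neg at h
    exact hc (funext fun r => h r)
  rw [LinearMap.range_eq_top]
  intro z
  refine ⟨(z / c r) • (Pi.single r 1 : Fin d → ℝ), ?_⟩
  have h1 : dotL c ((z / c r) • (Pi.single r 1 : Fin d → ℝ))
      = (z / c r) * (c ⬝ᵥ (Pi.single r 1 : Fin d → ℝ)) := by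
    simp [dotProduct_smul]
  have h2 : c ⬝ᵥ (Pi.single r 1 : Fin d → ℝ) = c r := by
    simp [dotProduct_single]
  rw [h1, h2]
  field_simp

lemma finrank_ker_dotL {c : Fin d → ℝ} (hc : c ≠ 0) :
    Module.finrank ℝ (LinearMap.ker (dotL c)) + 1 = d := by
  have h := LinearMap.finrank_range_add_finrank_ker (dotL c)
  rw [range_dotL_eq_top hc] at h
  simp only [finrank_top, Module.finrank_self] at h
  have hd : Module.finrank ℝ (Fin d → ℝ) = d := by simp
  omega

lemma span_subset_hyperplane {F : Set (Fin d → ℝ)} {c : Fin d → ℝ} {c0 : ℝ}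
    (h : ∀ x ∈ F, c ⬝ᵥ x = c0) : ∀ z ∈ affineSpan ℝ F, c ⬝ᵥ z = c0 := by
  intro z hz
  refine affineSpan_induction (p := fun z => c ⬝ᵥ z = c0) hz h ?_
  intro a u v w hu hv hw
  simp only [vsub_eq_sub, vadd_eq_add, dotProduct_add, dotProduct_smul, dotProduct_sub,
    smul_eq_mul, hu, hv, hw]
  ring

lemma direction_le_ker {F : Set (Fin d → ℝ)} {c : Fin d → ℝ} {c0 : ℝ}
    (h : ∀ x ∈ F, c ⬝ᵥ x = c0) :
    (affineSpan ℝ F).direction ≤ LinearMap.ker (dotL c) := by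
  rcases Set.eq_empty_or_nonempty F with hF | ⟨q, hq⟩
  · rw [hF]
    simp [AffineSubspace.direction_eq_vectorSpan, vectorSpan_empty]
  · intro v hv
    have hq' : q ∈ affineSpan ℝ F := subset_affineSpan ℝ F hq
    rw [AffineSubspace.mem_direction_iff_eq_vsub ⟨q, hq'⟩] at hv
    obtain ⟨p1, hp1, p2, hp2, rfl⟩ := hv
    have h1 := span_subset_hyperplane h p1 hp1
    have h2 := span_subset_hyperplane h p2 hp2
    simp [LinearMap.mem_ker, vsub_eq_sub, dotProduct_sub, h1, h2]

lemma span_eq_hyperplane {F : Set (Fin d → ℝ)} {c : Fin d → ℝ} {c0 : ℝ}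
    (hsub : ∀ x ∈ F, c ⬝ᵥ x = c0) (hc : c ≠ 0) (hd : 1 ≤ d)
    (hdim : setDim F = (d : ℤ) - 1) :
    ((affineSpan ℝ F : AffineSubspace ℝ (Fin d → ℝ)) : Set (Fin d → ℝ))
      = {x | c ⬝ᵥ x = c0} := by
  have hFne : F.Nonempty := nonempty_of_setDim (by omega)
  obtain ⟨q, hq⟩ := hFne
  have hfr : Module.finrank ℝ (affineSpan ℝ F).direction = d - 1 := by
    have : setDim F = ((d - 1 : ℕ) : ℤ) := by rw [hdim]; omega
    exact finrank_of_setDim this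
  have hker := finrank_ker_dotL hc
  have hdir : (affineSpan ℝ F).direction = LinearMap.ker (dotL c) :=
    Submodule.eq_of_le_of_finrank_eq (direction_le_ker hsub) (by omega)
  ext z
  constructor
  · intro hz
    exact span_subset_hyperplane hsub z hz
  · intro hz
    have hzq : z - q ∈ (affineSpan ℝ F).direction := by
      rw [hdir]
      simp only [LinearMap.mem_ker, dotL_apply, dotProduct_sub]
      rw [hz, hsub q hq]
      ring
    have := AffineSubspace.vadd_mem_of_mem_direction hzq (subset_affineSpan ℝ F hq)
    simpa [vadd_eq_add, sub_add_cancel] using this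

lemma side_of_hyperplane_eq {c c' : Fin d → ℝ} {c0 c0' : ℝ} (hc : c ≠ 0)
    (hH : {x : Fin d → ℝ | c ⬝ᵥ x = c0} = {x | c' ⬝ᵥ x = c0'})
    {Y : Set (Fin d → ℝ)} (hY : ∀ x ∈ Y, c' ⬝ᵥ x ≤ c0') :
    (∀ x ∈ Y, c ⬝ᵥ x ≤ c0) ∨ (∀ x ∈ Y, c0 ≤ c ⬝ᵥ x) := by
  obtain ⟨r, hr⟩ : ∃ r, c r ≠ 0 := by
    by_contra h
    push_neg at h
    exact hc (funext fun r => h r)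
  set v : Fin d → ℝ := Pi.single r 1 with hv
  have hcv : c ⬝ᵥ v ≠ 0 := by simpa [hv, dotProduct_single] using hr
  have hkey : ∀ x : Fin d → ℝ, c' ⬝ᵥ x - c0' = ((c' ⬝ᵥ v) / (c ⬝ᵥ v)) * (c ⬝ᵥ x - c0) := by
    intro x
    set t : ℝ := (c ⬝ᵥ x - c0) / (c ⬝ᵥ v) with ht
    have hu : c ⬝ᵥ (x - t • v) = c0 := by
      simp only [dotProduct_sub, dotProduct_smul, smul_eq_mul, ht]
      field_simp
      ring
    have hu' : c' ⬝ᵥ (x - t • v) = c0' := by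
      have : (x - t • v) ∈ {x : Fin d → ℝ | c ⬝ᵥ x = c0} := hu
      rw [hH] at this
      exact this
    have hexp : c' ⬝ᵥ x - t * (c' ⬝ᵥ v) = c0' := by
      simpa [dotProduct_sub, dotProduct_smul, smul_eq_mul] using hu'
    rw [ht] at hexp
    field_simp at hexp ⊢
    linarith
  set μ := (c' ⬝ᵥ v) / (c ⬝ᵥ v) with hμ
  rcases lt_trichotomy μ 0 with hμ0 | hμ0 | hμ0
  · right
    intro x hx
    have h1 := hY x hx
    have h2 := hkey x
    nlinarith
  · exfalso
    have : ∀ x : Fin d → ℝ, c' ⬝ᵥ x = c0' := by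
      intro x
      have := hkey x
      rw [hμ0] at this
      linarith
    have hw : ((c0 + 1) / (c ⬝ᵥ v)) • v ∈ {x : Fin d → ℝ | c' ⬝ᵥ x = c0'} := this _
    rw [← hH] at hw
    have heq : c ⬝ᵥ (((c0 + 1) / (c ⬝ᵥ v)) • v) = c0 + 1 := by
      simp only [dotProduct_smul, smul_eq_mul]
      field_simp
    simp only [Set.mem_setOf_eq] at hw
    rw [heq] at hw
    linarith
  · left
    intro x hx
    have h1 := hY x hx
    have h2 := hkey x
    nlinarith

end Aux4
section Aux5
open Set

variable {d m : ℕ}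

lemma dot_sum_smul (c : Fin d → ℝ) {m : ℕ} (μ : Fin m → ℝ) (p : Fin m → (Fin d → ℝ)) :
    c ⬝ᵥ (∑ i, μ i • p i) = ∑ i, μ i * (c ⬝ᵥ p i) := by
  have h : dotL c (∑ i, μ i • p i) = ∑ i, dotL c (μ i • p i) :=
    map_sum (dotL c) (fun i => μ i • p i) Finset.univ
  rw [show c ⬝ᵥ (∑ i, μ i • p i) = dotL c (∑ i, μ i • p i) from rfl, h]
  refine Finset.sum_congr rfl fun i _ => ?_
  simp [dotProduct_smul]

lemma mem_convOf_iff {Q : Matrix (Fin d) (Fin m) ℝ} {x : Fin d → ℝ} :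
    x ∈ convOf Q ↔ ∃ μ : Fin m → ℝ, (∀ i, 0 ≤ μ i) ∧ ∑ i, μ i = 1 ∧
      x = ∑ i, μ i • colFun Q i := by
  classical
  unfold convOf
  rw [convexHull_range_eq_exists_affineCombination]
  constructor
  · rintro ⟨s, w, hw0, hw1, rfl⟩
    refine ⟨fun i => if i ∈ s then w i else 0, ?_, ?_, ?_⟩
    · intro i
      dsimp only
      split_ifs with h
      · exact hw0 i h
      · exact le_refl 0
    · dsimp only
      rw [Finset.sum_ite_mem, Finset.univ_inter]
      exact hw1
    · dsimp only
      calc Finset.affineCombination ℝ s (colFun Q) w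
          = ∑ i ∈ s, w i • colFun Q i :=
            Finset.affineCombination_eq_linear_combination s _ _ hw1
        _ = ∑ i ∈ s, (if i ∈ s then w i else 0) • colFun Q i :=
            Finset.sum_congr rfl (fun i hi => by rw [if_pos hi])
        _ = ∑ i, (if i ∈ s then w i else 0) • colFun Q i :=
            Finset.sum_subset (Finset.subset_univ s)
              (fun i _ hi => by rw [if_neg hi, zero_smul])
      
  · rintro ⟨μ, hμ0, hμ1, rfl⟩
    exact ⟨Finset.univ, μ, fun i _ => hμ0 i, hμ1,
      Finset.affineCombination_eq_linear_combination _ _ _ hμ1⟩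

lemma convex_convOf (Q : Matrix (Fin d) (Fin m) ℝ) : Convex ℝ (convOf Q) :=
  convex_convexHull ℝ _

lemma convex_facetOfIdx (Q : Matrix (Fin d) (Fin m) ℝ) (I : Set ℕ) :
    Convex ℝ (facetOfIdx Q I) := convex_convexHull ℝ _

lemma IsFace.convex {P F : Set (Fin d → ℝ)} (hP : Convex ℝ P) (hF : IsFace P F) :
    Convex ℝ F := by
  obtain ⟨c, c0, hle, rfl⟩ := hF
  have heq : {x ∈ P | c ⬝ᵥ x = c0} = P ∩ {x | (fun y => c ⬝ᵥ y) x = c0} := rfl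
  rw [heq]
  exact hP.inter (convex_hyperplane (dotL c).isLinear c0)

lemma face_eq_facetOfIdx {Q : Matrix (Fin d) (Fin m) ℝ} {F : Set (Fin d → ℝ)}
    (hF : IsFace (convOf Q) F) :
    F = facetOfIdx Q {i : ℕ | ∃ h : i < m, colFun Q ⟨i, h⟩ ∈ F} := by
  classical
  obtain ⟨c, c0, hle, hFeq⟩ := hF
  apply Set.Subset.antisymm
  · intro x hx
    have hxP : x ∈ convOf Q := by rw [hFeq] at hx; exact hx.1
    have hxc : c ⬝ᵥ x = c0 := by rw [hFeq] at hx; exact hx.2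
    obtain ⟨μ, hμ0, hμ1, hxeq⟩ := mem_convOf_iff.mp hxP
    have hcols : ∀ i : Fin m, colFun Q i ∈ convOf Q := fun i =>
      subset_convexHull ℝ _ ⟨i, rfl⟩
    have hsum0 : ∑ i, μ i * (c0 - c ⬝ᵥ colFun Q i) = 0 := by
      have hds := dot_sum_smul c μ (colFun Q)
      rw [← hxeq, hxc] at hds
      have : ∑ i, μ i * (c0 - c ⬝ᵥ colFun Q i)
          = (∑ i, μ i) * c0 - ∑ i, μ i * (c ⬝ᵥ colFun Q i) := by
        rw [Finset.sum_mul, ← Finset.sum_sub_distrib]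
        congr 1; funext i; ring
      rw [this, hμ1, ← hds]
      ring
    have hkey : ∀ i : Fin m, μ i ≠ 0 → c ⬝ᵥ colFun Q i = c0 := by
      intro i hi
      have hterm := (Finset.sum_eq_zero_iff_of_nonneg
        (fun i _ => mul_nonneg (hμ0 i) (by linarith [hle _ (hcols i)]))).mp hsum0 i
        (Finset.mem_univ i)
      rcases mul_eq_zero.mp hterm with h | h
      · exact absurd h hi
      · linarith
    set T := Finset.univ.filter (fun i : Fin m => μ i ≠ 0) with hT
    have hTsum : ∑ i ∈ T, μ i = 1 := by
      rw [hT, Finset.sum_filter_ne_zero, hμ1]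
    have hxT : x = ∑ i ∈ T, μ i • colFun Q i := by
      rw [hxeq, hT]
      rw [Finset.sum_filter_of_ne]
      intro i _ hne hzero
      rw [hzero, zero_smul] at hne
      exact hne rfl
    have hcm : T.centerMass μ (colFun Q) = x := by
      rw [Finset.centerMass, hTsum, hxT]
      simp
    rw [← hcm]
    apply Finset.centerMass_mem_convexHull
    · intro i _; exact hμ0 i
    · rw [hTsum]; norm_num
    · intro i hiT
      have hiμ : μ i ≠ 0 := by
        rw [hT] at hiT
        exact (Finset.mem_filter.mp hiT).2
      refine ⟨i, ⟨i.isLt, ?_⟩, rfl⟩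
      rw [hFeq]
      exact ⟨hcols i, hkey i hiμ⟩
  · apply convexHull_min
    · rintro x ⟨i, ⟨hi, hmem⟩, rfl⟩
      exact hmem
    · exact IsFace.convex (convex_convOf Q) ⟨c, c0, hle, hFeq⟩

lemma isFacet_facetOfIdx {Q : Matrix (Fin d) (Fin m) ℝ} {I : Set ℕ}
    (hI : I ∈ idxFacets Q) : IsFacet (convOf Q) (facetOfIdx Q I) := by
  obtain ⟨F, hF, rfl⟩ := hI
  rw [← face_eq_facetOfIdx hF.1]
  exact hF

lemma facet_props {P F : Set (Fin d → ℝ)} (hd : 2 ≤ d) (hPdim : setDim P = (d : ℤ))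
    (hF : IsFacet P F) :
    ∃ c : Fin d → ℝ, ∃ c0 : ℝ, c ≠ 0 ∧ (∀ x ∈ P, c ⬝ᵥ x ≤ c0) ∧
      F = {x ∈ P | c ⬝ᵥ x = c0} ∧
      ((affineSpan ℝ F : AffineSubspace ℝ (Fin d → ℝ)) : Set (Fin d → ℝ))
        = {x | c ⬝ᵥ x = c0} := by
  obtain ⟨⟨c, c0, hle, hFeq⟩, hFdim⟩ := hF
  rw [hPdim] at hFdim
  have hc : c ≠ 0 := by
    rintro rfl
    by_cases h0 : c0 = 0
    · have : F = P := by
        rw [hFeq]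
        ext x; simp [zero_dotProduct, h0]
      rw [this, hPdim] at hFdim
      omega
    · have : F = ∅ := by
        rw [hFeq]
        ext x; simp [zero_dotProduct, h0]
        intro _; exact fun hc0 => h0 hc0.symm
      rw [this] at hFdim
      have he : setDim (∅ : Set (Fin d → ℝ)) = -1 := by
        unfold setDim
        rw [if_pos rfl]
      rw [he] at hFdim
      omega
  refine ⟨c, c0, hc, hle, hFeq, ?_⟩
  exact span_eq_hyperplane (fun x hx => by rw [hFeq] at hx; exact hx.2) hc
    (by omega) hFdim

lemma setDim_ge_of_affineIndependent {s : Set (Fin d → ℝ)} {n : ℕ}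
    {Z : Fin (n + 1) → (Fin d → ℝ)} (hZ : ∀ i, Z i ∈ s)
    (hind : AffineIndependent ℝ Z) : (n : ℤ) ≤ setDim s := by
  have hne : s ≠ ∅ := by
    intro he
    have := hZ 0
    rw [he] at this
    exact this
  rw [setDim_of_ne hne]
  have h1 : Module.finrank ℝ (vectorSpan ℝ (Set.range Z)) = n :=
    hind.finrank_vectorSpan (by simp)
  have h2 : vectorSpan ℝ (Set.range Z) ≤ (affineSpan ℝ s).direction := by
    rw [← direction_affineSpan]
    exact AffineSubspace.direction_le (affineSpan_mono ℝ (Set.range_subset_iff.mpr hZ))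
  have := Submodule.finrank_mono h2
  omega

lemma exists_fin_points {F : Set (Fin d → ℝ)} (hd : 2 ≤ d)
    (hdim : setDim F = (d : ℤ) - 1) :
    ∃ f : Fin d → (Fin d → ℝ), (∀ i, f i ∈ F) ∧ AffineIndependent ℝ f ∧
      affineSpan ℝ (Set.range f) = affineSpan ℝ F := by
  classical
  have hFne : F.Nonempty := nonempty_of_setDim (by omega)
  have hfr : Module.finrank ℝ (affineSpan ℝ F).direction = d - 1 := by
    have : setDim F = ((d - 1 : ℕ) : ℤ) := by rw [hdim]; omega
    exact finrank_of_setDim this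
  obtain ⟨t, hts, htspan, htind⟩ := exists_affineIndependent ℝ (Fin d → ℝ) F
  have htfin : t.Finite := finite_set_of_fin_dim_affineIndependent ℝ htind
  have : Fintype t := htfin.fintype
  have htne : t.Nonempty := by
    rcases Set.eq_empty_or_nonempty t with h | h
    · exfalso
      rw [h] at htspan
      rw [AffineSubspace.span_empty] at htspan
      obtain ⟨q, hq⟩ := hFne
      have := subset_affineSpan ℝ F hq
      rw [← htspan] at this
      exact this
    · exact h
  have : Nonempty t := htne.to_subtype
  have hcard : Fintype.card t = d := by
    have h1 := htind.finrank_vectorSpan_add_one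
    have h2 : vectorSpan ℝ (Set.range ((↑) : t → (Fin d → ℝ))) = vectorSpan ℝ t := by
      rw [Subtype.range_coe]
    have h3 : vectorSpan ℝ (t : Set (Fin d → ℝ)) = (affineSpan ℝ F).direction := by
      rw [← direction_affineSpan, htspan]
    rw [h2, h3, hfr] at h1
    have hdd : d - 1 + 1 = d := by omega
    rw [hdd] at h1
    exact h1.symm
  have e : Fin d ≃ t := (Fintype.equivFinOfCardEq hcard).symm
  refine ⟨fun i => (e i : Fin d → ℝ), fun i => hts (e i).2, ?_, ?_⟩
  · exact htind.comp_embedding e.toEmbedding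
  · have hrange : Set.range (fun i => ((e i : t) : Fin d → ℝ)) = t := by
      ext x
      constructor
      · rintro ⟨i, rfl⟩; exact (e i).2
      · intro hx
        exact ⟨e.symm ⟨x, hx⟩, by simp⟩
    rw [hrange, htspan]

end Aux5
section Aux6
open Set Finset

variable {d : ℕ}

lemma exists_strict_point {X : Set (Fin d → ℝ)} (hXd : setDim X = (d : ℤ))
    {c : Fin d → ℝ} {c0 : ℝ} (hc : c ≠ 0) (hXle : ∀ x ∈ X, c ⬝ᵥ x ≤ c0)
    (hd : 1 ≤ d) : ∃ x0 ∈ X, c ⬝ᵥ x0 < c0 := by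
  by_contra h
  push_neg at h
  have hall : ∀ x ∈ X, c ⬝ᵥ x = c0 := fun x hx => le_antisymm (hXle x hx) (h x hx)
  have h1 := Submodule.finrank_mono (direction_le_ker hall)
  have h2 := finrank_ker_dotL hc
  have h3 := finrank_of_setDim hXd
  omega

lemma dot_combo {m : ℕ} {F : Set (Fin d → ℝ)} {c : Fin d → ℝ} {c0 : ℝ}
    (hFH : ∀ x ∈ F, c ⬝ᵥ x = c0) (f : Fin m → (Fin d → ℝ)) (hf : ∀ i, f i ∈ F)
    (t : Fin m → ℝ) (ht : ∑ i, t i = 1) : c ⬝ᵥ (∑ i, t i • f i) = c0 := by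
  rw [dot_sum_smul]
  have h : ∀ i ∈ Finset.univ, t i * (c ⬝ᵥ f i) = t i * c0 := fun i _ => by
    rw [hFH (f i) (hf i)]
  rw [Finset.sum_congr rfl h, ← Finset.sum_mul, ht, one_mul]

/-- The family of points spanning everything: `f` extended by `x0`. -/
lemma span_top_of_off_hyperplane {c : Fin d → ℝ} {c0 : ℝ} (hc : c ≠ 0)
    (hd : 2 ≤ d) {F : Set (Fin d → ℝ)} (hFH : ∀ x ∈ F, c ⬝ᵥ x = c0)
    (hFdim : setDim F = (d : ℤ) - 1) {f : Fin d → (Fin d → ℝ)}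
    (hfF : ∀ i, f i ∈ F) (hfspan : affineSpan ℝ (Set.range f) = affineSpan ℝ F)
    {x0 : Fin d → ℝ} (hx0lt : c ⬝ᵥ x0 < c0) :
    affineSpan ℝ (Set.range (Fin.snoc f x0 : Fin (d+1) → (Fin d → ℝ))) = ⊤ := by
  set g : Fin (d + 1) → (Fin d → ℝ) := Fin.snoc f x0 with hg
  have i0 : Fin d := ⟨0, by omega⟩
  have hsub : Set.range f ⊆ Set.range g := by
    rintro x ⟨i, rfl⟩
    exact ⟨i.castSucc, by rw [hg]; simp⟩
  have hx0g : x0 ∈ Set.range g := ⟨Fin.last d, by rw [hg]; simp⟩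
  have hf0g : f i0 ∈ Set.range g := hsub ⟨i0, rfl⟩
  have hDle : (affineSpan ℝ F).direction ≤ (affineSpan ℝ (Set.range g)).direction := by
    rw [← hfspan]
    exact AffineSubspace.direction_le (affineSpan_mono ℝ hsub)
  have hvmem : x0 - f i0 ∈ (affineSpan ℝ (Set.range g)).direction := by
    have h := AffineSubspace.vsub_mem_direction
      (subset_affineSpan ℝ _ hx0g) (subset_affineSpan ℝ _ hf0g)
    simpa [vsub_eq_sub] using h
  have hvnot : x0 - f i0 ∉ (affineSpan ℝ F).direction := by
    intro hmem
    have hker := direction_le_ker hFH hmem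
    simp only [LinearMap.mem_ker, dotL_apply, dotProduct_sub] at hker
    rw [hFH (f i0) (hfF i0)] at hker
    linarith
  have hlt : (affineSpan ℝ F).direction < (affineSpan ℝ (Set.range g)).direction :=
    lt_of_le_of_ne hDle (fun he => hvnot (he ▸ hvmem))
  have hfr : Module.finrank ℝ (affineSpan ℝ F).direction = d - 1 :=
    finrank_of_setDim (by rw [hFdim]; omega)
  have hlt2 := Submodule.finrank_lt_finrank_of_lt hlt
  have hle2 := Submodule.finrank_le (affineSpan ℝ (Set.range g)).direction
  have hfin : Module.finrank ℝ (Fin d → ℝ) = d := by simp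
  have hfrg : Module.finrank ℝ (affineSpan ℝ (Set.range g)).direction = d := by omega
  have hdirtop : (affineSpan ℝ (Set.range g)).direction = ⊤ := by
    apply Submodule.eq_top_of_finrank_eq
    rw [hfrg, hfin]
  rw [eq_top_iff]
  intro z _
  have hz : z - x0 ∈ (affineSpan ℝ (Set.range g)).direction := by
    rw [hdirtop]; trivial
  have h := AffineSubspace.vadd_mem_of_mem_direction hz (subset_affineSpan ℝ _ hx0g)
  simpa [vadd_eq_add, sub_add_cancel] using h

set_option maxHeartbeats 2000000 in
lemma overlap_of_same_side (hd : 2 ≤ d) {X Y F : Set (Fin d → ℝ)}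
    (hX : Convex ℝ X) (hY : Convex ℝ Y)
    (hXd : setDim X = (d : ℤ)) (hYd : setDim Y = (d : ℤ))
    {c : Fin d → ℝ} {c0 : ℝ} (hc : c ≠ 0)
    (hXle : ∀ x ∈ X, c ⬝ᵥ x ≤ c0) (hYle : ∀ x ∈ Y, c ⬝ᵥ x ≤ c0)
    (hFX : F ⊆ X) (hFY : F ⊆ Y) (hFconv : Convex ℝ F)
    (hFH : ∀ x ∈ F, c ⬝ᵥ x = c0) (hFdim : setDim F = (d : ℤ) - 1) :
    setDim (X ∩ Y) = (d : ℤ) := by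
  classical
  have hd0 : (0 : ℝ) < d := by positivity
  have hdne : (d : ℝ) ≠ 0 := ne_of_gt hd0
  obtain ⟨f, hfF, hfind, hfspan⟩ := exists_fin_points hd hFdim
  obtain ⟨x0, hx0X, hx0lt⟩ := exists_strict_point hXd hc hXle (by omega)
  obtain ⟨y0, hy0Y, hy0lt⟩ := exists_strict_point hYd hc hYle (by omega)
  have hgtop := span_top_of_off_hyperplane hc hd hFH hFdim hfF hfspan hx0lt
  -- opaque positive gaps
  obtain ⟨βx, hβx0, hcx0⟩ : ∃ b : ℝ, 0 < b ∧ c ⬝ᵥ x0 = c0 - b :=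
    ⟨c0 - c ⬝ᵥ x0, by linarith, by ring⟩
  obtain ⟨βy, hβy0, hcy0v⟩ : ∃ b : ℝ, 0 < b ∧ c ⬝ᵥ y0 = c0 - b :=
    ⟨c0 - c ⬝ᵥ y0, by linarith, by ring⟩
  have hβyne : βy ≠ 0 := ne_of_gt hβy0
  -- affine coordinates of y0 w.r.t. (f, x0)
  obtain ⟨aa, hy0rep', haasum⟩ :
      ∃ aa : Fin (d+1) → ℝ,
        y0 = ∑ i : Fin d, aa i.castSucc • f i + aa (Fin.last d) • x0 ∧
        ∑ i : Fin d, aa i.castSucc + aa (Fin.last d) = 1 := by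
    have hy0span : y0 ∈ affineSpan ℝ
        (Set.range (Fin.snoc f x0 : Fin (d+1) → (Fin d → ℝ))) := by
      rw [hgtop]; trivial
    obtain ⟨w, hwsum, hwcomb⟩ :=
      eq_affineCombination_of_mem_affineSpan_of_fintype hy0span
    refine ⟨w, ?_, ?_⟩
    · rw [hwcomb, Finset.affineCombination_eq_linear_combination _ _ _ hwsum,
        Fin.sum_univ_castSucc]
      simp
    · rw [← hwsum, Fin.sum_univ_castSucc]
  set a : Fin d → ℝ := fun i => aa i.castSucc with ha
  set alast : ℝ := aa (Fin.last d) with halastdef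
  have hasum : ∑ i : Fin d, a i + alast = 1 := haasum
  have hy0rep : y0 = ∑ i : Fin d, a i • f i + alast • x0 := hy0rep'
  clear hy0rep' haasum
  have hcy0 : c ⬝ᵥ y0 = (∑ i, a i) * c0 + alast * (c ⬝ᵥ x0) := by
    rw [hy0rep, dotProduct_add, dot_sum_smul, dotProduct_smul, smul_eq_mul]
    congr 1
    rw [Finset.sum_mul]
    refine Finset.sum_congr rfl fun i _ => ?_
    rw [hFH (f i) (hfF i)]
  have hbal : alast * βx = βy := by
    have h3 : ∑ i : Fin d, a i = 1 - alast := by linarith [hasum]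
    rw [hcy0v, hcx0, h3] at hcy0
    linear_combination hcy0
  have halast0 : 0 < alast := by
    rcases le_or_gt alast 0 with h | h
    · exfalso
      nlinarith [mul_nonpos_of_nonpos_of_nonneg h hβx0.le]
    · exact h
  -- bound on the coordinates
  obtain ⟨A, hA1, hAbound⟩ : ∃ A : ℝ, 1 ≤ A ∧ ∀ i, |a i| ≤ A := by
    refine ⟨1 + ∑ i : Fin d, |a i|, ?_, ?_⟩
    · have h := Finset.sum_nonneg (fun i (_ : i ∈ Finset.univ) => abs_nonneg (a i))
      linarith
    · intro i
      have h := Finset.single_le_sum (f := fun i => |a i|)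
        (fun i _ => abs_nonneg _) (Finset.mem_univ i)
      linarith
  have hA0 : (0:ℝ) < A := by linarith
  -- choice of ε
  obtain ⟨ε, hε0, hε4, hεam, hεbm⟩ : ∃ ε : ℝ, 0 < ε ∧ ε ≤ 1/4 ∧
      ε * (4 * βx) ≤ βy ∧ ε * (8 * d * βx * A) ≤ βy := by
    refine ⟨min (1/4) (min (βy / (4 * βx)) (βy / (8 * d * βx * A))), ?_, ?_, ?_, ?_⟩
    · apply lt_min
      · norm_num
      · apply lt_min
        · exact div_pos hβy0 (by positivity)
        · exact div_pos hβy0 (by positivity)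
    · exact min_le_left _ _
    · rw [← le_div_iff₀ (by positivity : (0:ℝ) < 4 * βx)]
      exact le_trans (min_le_right _ _) (min_le_left _ _)
    · rw [← le_div_iff₀ (by positivity : (0:ℝ) < 8 * (d:ℝ) * βx * A)]
      exact le_trans (min_le_right _ _) (min_le_right _ _)
  -- key membership claims
  have hkeyY : ∀ t : Fin d → ℝ, (∀ i, 1/(2*(d:ℝ)) ≤ t i) → ∑ i, t i = 1 →
      ∀ η : ℝ, 0 < η → η ≤ 2*ε → (1-η) • (∑ i, t i • f i) + η • x0 ∈ Y := by
    intro t ht htsum η hη0 hη2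
    obtain ⟨s, hs0, hs2, hsalast, hsA⟩ : ∃ s : ℝ, 0 < s ∧ s ≤ 1/2 ∧
        s * alast = η ∧ s * A ≤ 1/(4*(d:ℝ)) := by
      refine ⟨η * βx / βy, div_pos (mul_pos hη0 hβx0) hβy0, ?_, ?_, ?_⟩
      · rw [div_le_iff₀ hβy0]
        have p1 : η * βx ≤ 2 * ε * βx := mul_le_mul_of_nonneg_right hη2 hβx0.le
        linarith [hεam]
      · rw [div_mul_eq_mul_div,
          show η * βx * alast = η * (alast * βx) by ring, hbal,
          mul_div_assoc, div_self hβyne, mul_one]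
      · rw [div_mul_eq_mul_div, div_le_div_iff₀ hβy0 (by positivity : (0:ℝ) < 4*(d:ℝ))]
        have p1 : η * (βx * A * (4*(d:ℝ))) ≤ 2 * ε * (βx * A * (4*(d:ℝ))) :=
          mul_le_mul_of_nonneg_right hη2 (by positivity)
        nlinarith [hεbm, p1]
    have hs1 : (1:ℝ) - s ≠ 0 := by linarith
    have hη12 : η ≤ 1/2 := by linarith
    obtain ⟨u, hu0, husum, hulin⟩ : ∃ u : Fin d → ℝ, (∀ i, 0 ≤ u i) ∧
        ∑ i, u i = 1 ∧ ∀ i, (1 - s) * u i = (1-η) * t i - s * a i := by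
      refine ⟨fun i => ((1-η) * t i - s * a i) / (1-s), ?_, ?_, ?_⟩
      · intro i
        dsimp only
        apply div_nonneg _ (by linarith)
        have h1 : 1/(4*(d:ℝ)) ≤ (1-η) * t i := by
          have hmm := mul_le_mul (by linarith : (1:ℝ)/2 ≤ 1 - η) (ht i)
            (by positivity) (by linarith)
          calc (1:ℝ)/(4*(d:ℝ)) = (1/2) * (1/(2*(d:ℝ))) := by
                rw [div_mul_div_comm]
                norm_num
                try ring
          _ ≤ (1-η) * t i := hmm
        have h2 : s * a i ≤ 1/(4*(d:ℝ)) := by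
          calc s * a i ≤ s * |a i| :=
                mul_le_mul_of_nonneg_left (le_abs_self _) hs0.le
          _ ≤ s * A := mul_le_mul_of_nonneg_left (hAbound i) hs0.le
          _ ≤ 1/(4*(d:ℝ)) := hsA
        linarith
      · dsimp only
        rw [← Finset.sum_div]
        have hnum : ∑ i, ((1-η) * t i - s * a i) = 1 - s := by
          rw [Finset.sum_sub_distrib, ← Finset.mul_sum, ← Finset.mul_sum, htsum]
          have h3 : ∑ i : Fin d, a i = 1 - alast := by linarith [hasum]
          rw [h3, mul_sub, hsalast, mul_one]
          ring
        rw [hnum, div_self hs1]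
      · intro i
        dsimp only
        rw [mul_comm, div_mul_cancel₀ _ hs1]
    have hgptF : (∑ i, u i • f i) ∈ F :=
      hFconv.sum_mem (fun i _ => hu0 i) husum (fun i _ => hfF i)
    have hcomb : (1 - s) • (∑ i, u i • f i) + s • y0
        = (1 - η) • (∑ i, t i • f i) + η • x0 := by
      have h1 : (1 - s) • (∑ i, u i • f i) = ∑ i, ((1 - η) * t i - s * a i) • f i := by
        rw [Finset.smul_sum]
        refine Finset.sum_congr rfl fun i _ => ?_
        rw [smul_smul, hulin i]
      have h2 : s • y0 = ∑ i, (s * a i) • f i + η • x0 := by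
        rw [hy0rep, smul_add, Finset.smul_sum, smul_smul, hsalast]
        congr 1
        refine Finset.sum_congr rfl fun i _ => ?_
        rw [smul_smul]
      have h3 : (1 - η) • (∑ i, t i • f i) = ∑ i, ((1 - η) * t i) • f i := by
        rw [Finset.smul_sum]
        refine Finset.sum_congr rfl fun i _ => ?_
        rw [smul_smul]
      rw [h1, h2, h3, ← add_assoc, ← Finset.sum_add_distrib]
      congr 1
      refine Finset.sum_congr rfl fun i _ => ?_
      rw [← add_smul]
      congr 1
      ring
    rw [← hcomb]
    exact hY (hFY hgptF) hy0Y (by linarith) hs0.le (by ring)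
  have hkeyX : ∀ t : Fin d → ℝ, (∀ i, 1/(2*(d:ℝ)) ≤ t i) → ∑ i, t i = 1 →
      ∀ η : ℝ, 0 < η → η ≤ 2*ε → (1-η) • (∑ i, t i • f i) + η • x0 ∈ X := by
    intro t ht htsum η hη0 hη2
    have hq : (∑ i, t i • f i) ∈ F := by
      apply hFconv.sum_mem _ htsum (fun i _ => hfF i)
      intro i _
      have h2d : (0:ℝ) < 1/(2*(d:ℝ)) := by positivity
      linarith [ht i]
    exact hX (hFX hq) hx0X (by linarith) hη0.le (by ring)
  -- weight families
  obtain ⟨tC, htClb, htCsum⟩ : ∃ tC : Fin d → ℝ,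
      (∀ j, 1/(2*(d:ℝ)) ≤ tC j) ∧ ∑ j, tC j = 1 := by
    refine ⟨fun _ => (d:ℝ)⁻¹, fun j => ?_, ?_⟩
    · rw [← one_div]
      exact one_div_le_one_div_of_le hd0 (by linarith)
    · rw [Finset.sum_const, Finset.card_univ, Fintype.card_fin, nsmul_eq_mul]
      field_simp
  obtain ⟨tU, htUlb, htUsum, htUalt⟩ : ∃ tU : Fin d → Fin d → ℝ,
      (∀ i j, 1/(2*(d:ℝ)) ≤ tU i j) ∧ (∀ i, ∑ j, tU i j = 1) ∧
      (∀ i, ∑ j, tU i j • f j = (1/2 : ℝ) • f i + ∑ j, (1/(2*(d:ℝ))) • f j) := by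
    refine ⟨fun i j => (if j = i then 1/2 else 0) + 1/(2*(d:ℝ)), ?_, ?_, ?_⟩
    · intro i j
      dsimp only
      have h2d : (0:ℝ) ≤ 1/(2*(d:ℝ)) := by positivity
      split_ifs <;> norm_num
    · intro i
      dsimp only
      rw [Finset.sum_add_distrib]
      have hc1 : ∑ _j : Fin d, 1/(2*(d:ℝ)) = 1/2 := by
        rw [Finset.sum_const, Finset.card_univ, Fintype.card_fin, nsmul_eq_mul]
        field_simp
      have hc2 : ∑ j : Fin d, (if j = i then (1:ℝ)/2 else 0) = 1/2 := by
        rw [Finset.sum_ite_eq' Finset.univ i (fun _ => (1:ℝ)/2)]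
        simp
      rw [hc1, hc2]
      norm_num
    · intro i
      dsimp only
      have hsplit : ∀ j : Fin d, ((if j = i then (1:ℝ)/2 else 0) + 1/(2*(d:ℝ))) • f j
          = (if j = i then ((1:ℝ)/2) • f j else 0) + (1/(2*(d:ℝ))) • f j := by
        intro j
        rw [add_smul]
        congr 1
        split_ifs <;> simp
      rw [Finset.sum_congr rfl (fun j _ => hsplit j), Finset.sum_add_distrib]
      congr 1
      rw [Finset.sum_ite_eq' Finset.univ i (fun j => ((1:ℝ)/2) • f j)]
      simp
  -- the d+1 points
  obtain ⟨Z, hZc, hZl⟩ : ∃ Z : Fin (d+1) → (Fin d → ℝ),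
      (∀ i : Fin d, Z i.castSucc = (1-ε) • (∑ j, tU i j • f j) + ε • x0) ∧
      Z (Fin.last d) = (1-2*ε) • (∑ j, tC j • f j) + (2*ε) • x0 := by
    refine ⟨Fin.snoc (fun i => (1-ε) • (∑ j, tU i j • f j) + ε • x0)
      ((1-2*ε) • (∑ j, tC j • f j) + (2*ε) • x0), fun i => ?_, ?_⟩
    · simp only [Fin.snoc_castSucc]
    · simp only [Fin.snoc_last]
  have hZmem : ∀ i, Z i ∈ X ∩ Y := by
    intro i
    induction i using Fin.lastCases with
    | last =>
        rw [hZl]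
        exact ⟨hkeyX tC htClb htCsum (2*ε) (by positivity) (le_refl _),
          hkeyY tC htClb htCsum (2*ε) (by positivity) (le_refl _)⟩
    | cast i =>
        rw [hZc i]
        exact ⟨hkeyX (tU i) (htUlb i) (htUsum i) ε hε0 (by linarith),
          hkeyY (tU i) (htUlb i) (htUsum i) ε hε0 (by linarith)⟩
  have hcZc : ∀ i : Fin d, c ⬝ᵥ Z i.castSucc = c0 - ε * βx := by
    intro i
    rw [hZc i, dotProduct_add, dotProduct_smul, dotProduct_smul,
      dot_combo hFH f hfF (tU i) (htUsum i), smul_eq_mul, smul_eq_mul, hcx0]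
    ring
  have hcZl : c ⬝ᵥ Z (Fin.last d) = c0 - 2 * ε * βx := by
    rw [hZl, dotProduct_add, dotProduct_smul, dotProduct_smul,
      dot_combo hFH f hfF tC htCsum, smul_eq_mul, smul_eq_mul, hcx0]
    ring
  have hZind : AffineIndependent ℝ Z := by
    rw [affineIndependent_iff_of_fintype]
    intro y hysum hyvsub
    have hycomb : ∑ i, y i • Z i = 0 := by
      rw [← Finset.weightedVSub_eq_linear_combination Finset.univ hysum]
      exact hyvsub
    have hysum' : ∑ i : Fin d, y i.castSucc + y (Fin.last d) = 0 := by
      rw [← Fin.sum_univ_castSucc]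
      exact hysum
    have hdot : ∑ i, y i * (c ⬝ᵥ Z i) = 0 := by
      have h : c ⬝ᵥ (∑ i, y i • Z i) = c ⬝ᵥ (0 : Fin d → ℝ) :=
        congrArg (fun z => c ⬝ᵥ z) hycomb
      rw [dot_sum_smul, dotProduct_zero] at h
      exact h
    rw [Fin.sum_univ_castSucc] at hdot
    have hdot' : (∑ i : Fin d, y i.castSucc) * (c0 - ε*βx)
        + y (Fin.last d) * (c0 - 2*ε*βx) = 0 := by
      rw [← hdot]
      congr 1
      · rw [Finset.sum_mul]
        refine Finset.sum_congr rfl fun i _ => ?_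
        rw [hcZc i]
      · rw [hcZl]
    have hlast0 : y (Fin.last d) = 0 := by
      have hS : (∑ i : Fin d, y i.castSucc) = - y (Fin.last d) := by
        linarith [hysum']
      rw [hS] at hdot'
      have hL : y (Fin.last d) * (ε * βx) = 0 := by
        linear_combination -hdot'
      rcases mul_eq_zero.mp hL with h | h
      · exact h
      · exfalso
        have := mul_pos hε0 hβx0
        linarith
    have hysum'' : ∑ i : Fin d, y i.castSucc = 0 := by linarith [hysum']
    have hrest : ∑ i : Fin d, y i.castSucc • Z i.castSucc = 0 := by
      rw [Fin.sum_univ_castSucc, hlast0, zero_smul, add_zero] at hycomb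
      exact hycomb
    have hqsum : ∑ i : Fin d, y i.castSucc • (∑ j, tU i j • f j) = 0 := by
      have hsplitZ : ∀ i : Fin d, y i.castSucc • Z i.castSucc
          = (1-ε) • (y i.castSucc • (∑ j, tU i j • f j)) + (ε * y i.castSucc) • x0 := by
        intro i
        rw [hZc i]
        module
      have hexp : ∑ i : Fin d, y i.castSucc • Z i.castSucc
          = (1-ε) • (∑ i : Fin d, y i.castSucc • (∑ j, tU i j • f j))
            + (ε * ∑ i : Fin d, y i.castSucc) • x0 := by
        rw [Finset.sum_congr rfl (fun i _ => hsplitZ i), Finset.sum_add_distrib]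
        congr 1
        · rw [Finset.smul_sum]
        · rw [Finset.mul_sum, Finset.sum_smul]
      rw [hexp, hysum'', mul_zero, zero_smul, add_zero] at hrest
      rcases smul_eq_zero.mp hrest with h | h
      · exfalso
        have h1ε : (1:ℝ) - ε ≠ 0 := by linarith
        exact h1ε h
      · exact h
    have hfsum : ∑ i : Fin d, y i.castSucc • f i = 0 := by
      have hsplit2 : ∀ i : Fin d, y i.castSucc • (∑ j, tU i j • f j)
          = (1/2 : ℝ) • (y i.castSucc • f i)
            + y i.castSucc • (∑ j, (1/(2*(d:ℝ))) • f j) := by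
        intro i
        rw [htUalt i]
        module
      have hexp2 : ∑ i : Fin d, y i.castSucc • (∑ j, tU i j • f j)
          = (1/2 : ℝ) • (∑ i : Fin d, y i.castSucc • f i)
            + (∑ i : Fin d, y i.castSucc) • (∑ j, (1/(2*(d:ℝ))) • f j) := by
        rw [Finset.sum_congr rfl (fun i _ => hsplit2 i), Finset.sum_add_distrib]
        congr 1
        · rw [Finset.smul_sum]
        · rw [Finset.sum_smul]
      rw [hexp2, hysum'', zero_smul, add_zero] at hqsum
      rcases smul_eq_zero.mp hqsum with h | h
      · norm_num at h
      · exact h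
    have hcast0 : ∀ i : Fin d, y i.castSucc = 0 := by
      have h := affineIndependent_iff.mp hfind Finset.univ
        (fun i => y i.castSucc) hysum'' hfsum
      intro i
      exact h i (Finset.mem_univ i)
    intro i
    induction i using Fin.lastCases with
    | last => exact hlast0
    | cast i => exact hcast0 i
  have hge : (d : ℤ) ≤ setDim (X ∩ Y) :=
    setDim_ge_of_affineIndependent (fun i => hZmem i) hZind
  exact le_antisymm (setDim_le_d _) hge

end Aux6
section Aux7
open Set

variable {d b : ℕ} {S : Type}

namespace BSpec

/-- shorthand: the facet `facetOfIdx` of a geometric-neighbor pair has dimension `d-1`. -/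
lemma facet_dim {m : ℕ} {Q : Matrix (Fin d) (Fin m) ℝ} {I : Set ℕ}
    (hI : I ∈ idxFacets Q) (hQd : setDim (convOf Q) = (d : ℤ)) :
    setDim (facetOfIdx Q I) = (d : ℤ) - 1 := by
  have h := (isFacet_facetOfIdx hI).2
  rw [hQd] at h
  exact h

/-- Uniqueness of the geometric neighbor of `x` at a given facet index set. -/
lemma geom_unique (hd : 2 ≤ d) {sp : BSpec d b S} (hreg : sp.Regular)
    {x y y' : List (Fin b)} {I : Set ℕ}
    (h1 : sp.GeomNbr x y I) (h2 : sp.GeomNbr x y' I) : y = y' := by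
  obtain ⟨hpre, hR1, hR2, hR3⟩ := hreg
  obtain ⟨hlen1, hxne, hidx, hint1, hfac1⟩ := h1
  obtain ⟨hlen2, -, -, hint2, hfac2⟩ := h2
  set F := facetOfIdx (sp.Qm x) I with hFdef
  have hXd := hpre.2 x
  have hYd := hpre.2 y
  have hY'd := hpre.2 y'
  have hFfacet : IsFacet (convOf (sp.Qm x)) F := isFacet_facetOfIdx hidx
  have hFdim : setDim F = (d : ℤ) - 1 := facet_dim hidx hXd
  obtain ⟨c, c0, hc, hle, hFeq, hspan⟩ := facet_props hd hXd hFfacet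
  have hFy : IsFacet (convOf (sp.Qm y)) F := by rw [← hint1]; exact hfac1
  have hFy' : IsFacet (convOf (sp.Qm y')) F := by rw [← hint2]; exact hfac2
  obtain ⟨cy, cy0, hcy, hley, hFeqy, hspany⟩ := facet_props hd hYd hFy
  obtain ⟨cz, cz0, hcz, hlez, hFeqz, hspanz⟩ := facet_props hd hY'd hFy'
  have hHy : {v : Fin d → ℝ | c ⬝ᵥ v = c0} = {v | cy ⬝ᵥ v = cy0} := by
    rw [← hspan, ← hspany]
  have hHz : {v : Fin d → ℝ | c ⬝ᵥ v = c0} = {v | cz ⬝ᵥ v = cz0} := by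
    rw [← hspan, ← hspanz]
  have hFX : F ⊆ convOf (sp.Qm x) := by rw [← hint1]; exact Set.inter_subset_left
  have hFY : F ⊆ convOf (sp.Qm y) := by rw [← hint1]; exact Set.inter_subset_right
  have hFY' : F ⊆ convOf (sp.Qm y') := by rw [← hint2]; exact Set.inter_subset_right
  have hFH : ∀ v ∈ F, c ⬝ᵥ v = c0 := fun v hv => by
    rw [hFeq] at hv; exact hv.2
  have hFconv : Convex ℝ F := convex_facetOfIdx _ _
  -- Y is on the far side of the hyperplane
  have hYfar : ∀ v ∈ convOf (sp.Qm y), c0 ≤ c ⬝ᵥ v := by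
    rcases side_of_hyperplane_eq hc hHy hley with hside | hside
    · exfalso
      have hdim := overlap_of_same_side hd (convex_convOf _) (convex_convOf _)
        hXd hYd hc hle hside hFX hFY hFconv hFH hFdim
      have hcontr : (d : ℤ) - 1 = (d : ℤ) := by
        rw [← hFdim, ← hint1]
        exact hdim
      omega
    · exact hside
  have hY'far : ∀ v ∈ convOf (sp.Qm y'), c0 ≤ c ⬝ᵥ v := by
    rcases side_of_hyperplane_eq hc hHz hlez with hside | hside
    · exfalso
      have hdim := overlap_of_same_side hd (convex_convOf _) (convex_convOf _)
        hXd hY'd hc hle hside hFX hFY' hFconv hFH hFdim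
      have hcontr : (d : ℤ) - 1 = (d : ℤ) := by
        rw [← hFdim, ← hint2]
        exact hdim
      omega
    · exact hside
  -- now y and y' overlap fully
  have hcneg : (-c : Fin d → ℝ) ≠ 0 := neg_ne_zero.mpr hc
  have hdimyy : setDim (convOf (sp.Qm y) ∩ convOf (sp.Qm y')) = (d : ℤ) := by
    apply overlap_of_same_side hd (convex_convOf _) (convex_convOf _)
      hYd hY'd hcneg (c0 := -c0)
    · intro v hv
      rw [neg_dotProduct]
      linarith [hYfar v hv]
    · intro v hv
      rw [neg_dotProduct]
      linarith [hY'far v hv]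
    · exact hFY
    · exact hFY'
    · exact hFconv
    · intro v hv
      rw [neg_dotProduct, hFH v hv]
    · exact hFdim
  exact (hR3 y y' (by rw [← hlen1, ← hlen2] : y.length = y'.length)).1 hdimyy

/-- Two facet index sets with the same facet polytope coincide. -/
lemma idx_unique {m : ℕ} {Q : Matrix (Fin d) (Fin m) ℝ} {J₁ J₂ : Set ℕ}
    (h1 : J₁ ∈ idxFacets Q) (h2 : J₂ ∈ idxFacets Q)
    (h : facetOfIdx Q J₁ = facetOfIdx Q J₂) : J₁ = J₂ := by
  obtain ⟨F1, hF1, rfl⟩ := h1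
  obtain ⟨F2, hF2, rfl⟩ := h2
  rw [← face_eq_facetOfIdx hF1.1, ← face_eq_facetOfIdx hF2.1] at h
  rw [h]

/-- The index-set formula determining the parent facet from the child facet. -/
def Jform (sp : BSpec d b S) (w : List (Fin b)) (j : Fin b) (I : Set ℕ) : Set ℕ :=
  {i : ℕ | ∃ h : i < sp.n (sp.st w), colFun (sp.Qm w) ⟨i, h⟩ ∈
    ((affineSpan ℝ (facetOfIdx (sp.Qm (w ++ [j])) I) :
      AffineSubspace ℝ (Fin d → ℝ)) : Set (Fin d → ℝ))}

lemma affineSpan_eq_of_subset_of_dim {s t : Set (Fin d → ℝ)} {k : ℕ}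
    (hsub : s ⊆ t) (hs : setDim s = (k : ℤ)) (ht : setDim t = (k : ℤ))
    (hne : s.Nonempty) : affineSpan ℝ s = affineSpan ℝ t := by
  have hle := affineSpan_mono ℝ hsub
  have hdir : (affineSpan ℝ s).direction = (affineSpan ℝ t).direction :=
    Submodule.eq_of_le_of_finrank_eq (AffineSubspace.direction_le hle)
      (by rw [finrank_of_setDim hs, finrank_of_setDim ht])
  obtain ⟨q, hq⟩ := hne
  exact AffineSubspace.ext_of_direction_eq hdir
    ⟨q, subset_affineSpan _ _ hq, subset_affineSpan _ _ (hsub hq)⟩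

lemma J_formula (hd : 2 ≤ d) {sp : BSpec d b S} (hreg : sp.Regular)
    {v v' : List (Fin b)} {J : Set ℕ} {j j' : Fin b} {I : Set ℕ}
    (hJ : sp.GeomNbr v v' J) (hI : sp.GeomNbr (v ++ [j]) (v' ++ [j']) I) :
    J = sp.Jform v j I := by
  obtain ⟨hpre, hR1, hR2, hR3⟩ := hreg
  obtain ⟨hlenJ, hvne, hidxJ, hintJ, hfacJ⟩ := hJ
  obtain ⟨hlenI, -, hidxI, hintI, hfacI⟩ := hI
  have hvd := hpre.2 v
  have hFJdim : setDim (facetOfIdx (sp.Qm v) J) = (d : ℤ) - 1 := facet_dim hidxJ hvd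
  have hFIdim : setDim (facetOfIdx (sp.Qm (v ++ [j])) I) = (d : ℤ) - 1 :=
    facet_dim hidxI (hpre.2 (v ++ [j]))
  have hsub : facetOfIdx (sp.Qm (v ++ [j])) I ⊆ facetOfIdx (sp.Qm v) J := by
    rw [← hintI, ← hintJ]
    exact Set.inter_subset_inter (hR2 v j) (hR2 v' j')
  have hspan_eq : affineSpan ℝ (facetOfIdx (sp.Qm (v ++ [j])) I)
      = affineSpan ℝ (facetOfIdx (sp.Qm v) J) := by
    have hne : (facetOfIdx (sp.Qm (v ++ [j])) I).Nonempty := by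
      apply nonempty_of_setDim
      rw [hFIdim]
      omega
    have hdk : ((d - 1 : ℕ) : ℤ) = (d : ℤ) - 1 := by omega
    exact affineSpan_eq_of_subset_of_dim hsub (by rw [hFIdim, hdk])
      (by rw [hFJdim, hdk]) hne
  -- identify J with the column index set of its facet
  obtain ⟨FJ, hFJ, hJdef⟩ := hidxJ
  have hFJeq : FJ = facetOfIdx (sp.Qm v) J := by
    conv_lhs => rw [face_eq_facetOfIdx hFJ.1]
    rw [← hJdef]
  obtain ⟨c, c0, hc, hle, hFeq, hspan⟩ := facet_props hd hvd
    (hFJeq ▸ hFJ : IsFacet (convOf (sp.Qm v)) (facetOfIdx (sp.Qm v) J))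
  rw [hJdef]
  unfold Jform
  ext i
  simp only [Set.mem_setOf_eq]
  constructor
  · rintro ⟨h, hmem⟩
    refine ⟨h, ?_⟩
    rw [hspan_eq]
    apply subset_affineSpan
    rw [← hFJeq]
    exact hmem
  · rintro ⟨h, hmem⟩
    refine ⟨h, ?_⟩
    rw [hspan_eq, hspan] at hmem
    rw [hFJeq, hFeq]
    refine ⟨subset_convexHull ℝ _ ⟨⟨i, h⟩, rfl⟩, hmem⟩

lemma Jform_invariant {sp : BSpec d b S} (hpre : sp.PreRegular)
    {v w : List (Fin b)} (hst : sp.st v = sp.st w) (j : Fin b) (I : Set ℕ) :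
    sp.Jform v j I = sp.Jform w j I := by
  obtain ⟨τ, hτ⟩ := hpre.1 v w hst
  have hch := simby_child hst hτ j
  have hfac : facetOfIdx (sp.Qm (w ++ [j])) I
      = ⇑τ '' facetOfIdx (sp.Qm (v ++ [j])) I := facetOfIdx_sim hch I
  have hspan : affineSpan ℝ (facetOfIdx (sp.Qm (w ++ [j])) I)
      = (affineSpan ℝ (facetOfIdx (sp.Qm (v ++ [j])) I)).map τ.toAffineMap := by
    rw [hfac, AffineSubspace.map_span]
    rfl
  have hn : sp.n (sp.st v) = sp.n (sp.st w) := by rw [hst]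
  unfold Jform
  ext i
  simp only [Set.mem_setOf_eq]
  constructor
  · rintro ⟨h, hmem⟩
    refine ⟨hn ▸ h, ?_⟩
    rw [hτ.2 i h (hn ▸ h), hspan]
    exact ⟨colFun (sp.Qm v) ⟨i, h⟩, hmem, rfl⟩
  · rintro ⟨h, hmem⟩
    refine ⟨hn ▸ h, ?_⟩
    rw [hτ.2 i (hn ▸ h) h, hspan] at hmem
    obtain ⟨z, hz, hzeq⟩ := hmem
    have : z = colFun (sp.Qm v) ⟨i, hn ▸ h⟩ := τ.injective hzeq
    rwa [← this]

/-- The parents of geometric neighbors are equal or geometric neighbors. -/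
lemma parent_geom (hd : 2 ≤ d) {sp : BSpec d b S} (hreg : sp.Regular)
    {v v' : List (Fin b)} {j j' : Fin b} {I : Set ℕ}
    (hI : sp.GeomNbr (v ++ [j]) (v' ++ [j']) I) :
    v = v' ∨ ∃ J, sp.GeomNbr v v' J := by
  by_cases hvv : v = v'
  · exact Or.inl hvv
  right
  obtain ⟨hpre, hR1, hR2, hR3⟩ := hreg
  obtain ⟨hlenI, -, hidxI, hintI, hfacI⟩ := hI
  have hlen : v.length = v'.length := by
    simpa using hlenI
  have hFIdim : setDim (facetOfIdx (sp.Qm (v ++ [j])) I) = (d : ℤ) - 1 :=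
    facet_dim hidxI (hpre.2 (v ++ [j]))
  have hsub : facetOfIdx (sp.Qm (v ++ [j])) I ⊆ convOf (sp.Qm v) ∩ convOf (sp.Qm v') := by
    rw [← hintI]
    exact Set.inter_subset_inter (hR2 v j) (hR2 v' j')
  have hge : (d : ℤ) - 1 ≤ setDim (convOf (sp.Qm v) ∩ convOf (sp.Qm v')) := by
    rw [← hFIdim]
    exact setDim_mono hsub
  have hle := setDim_le_d (convOf (sp.Qm v) ∩ convOf (sp.Qm v'))
  rcases eq_or_lt_of_le hle with heq | hlt
  · exact absurd ((hR3 v v' hlen).1 heq) hvv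
  · have hcase : setDim (convOf (sp.Qm v) ∩ convOf (sp.Qm v')) = (d : ℤ) - 1 := by
      omega
    obtain ⟨J, -, hJ⟩ := (hR3 v v' hlen).2 hcase
    exact ⟨J, hJ⟩

end BSpec
end Aux7
section Aux8
open Set

variable {d b : ℕ} {S : Type}

lemma append_single_inj {α : Type} {w w' : List α} {a c : α}
    (h : w ++ [a] = w' ++ [c]) : w = w' ∧ a = c := by
  obtain ⟨h1, h2⟩ := List.append_inj' h rfl
  exact ⟨h1, by simpa using h2⟩

lemma eq_parent_of_getLast? {α : Type} {x : List α} {j : α}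
    (h : x.getLast? = some j) : x = x.dropLast ++ [j] := by
  have hx : x ≠ [] := by rintro rfl; simp at h
  have h2 : x.getLast? = some (x.getLast hx) := List.getLast?_eq_getLast hx
  rw [h2] at h
  have h3 : x.getLast hx = j := Option.some_inj.mp h
  rw [← h3]
  exact (List.dropLast_append_getLast hx).symm

namespace BSpec

lemma Nlook_eq_some (hd : 2 ≤ d) {sp : BSpec d b S} (hreg : sp.Regular)
    {w : List (Fin b)} {j j' : Fin b} {I : Set ℕ}
    (hg : sp.GeomNbr (w ++ [j]) (w ++ [j']) I) :
    sp.Nlook j (sp.st w) I = some j' := by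
  have hex : ∃ jj : Fin b, ∃ v : List (Fin b),
      sp.st v = sp.st w ∧ sp.GeomNbr (v ++ [j]) (v ++ [jj]) I := ⟨j', w, rfl, hg⟩
  unfold Nlook
  rw [dif_pos hex]
  obtain ⟨v₀, hst₀, hg₀⟩ := hex.choose_spec
  have htr := sibling_transfer hreg.1 hst₀ hg₀
  have heq := geom_unique hd hreg hg htr
  obtain ⟨-, h2⟩ := append_single_inj heq
  rw [h2]

lemma Nlook_eq_none (hd : 2 ≤ d) {sp : BSpec d b S} (hreg : sp.Regular)
    {w w' : List (Fin b)} {j j' : Fin b} {I : Set ℕ}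
    (hww : w ≠ w') (hg : sp.GeomNbr (w ++ [j]) (w' ++ [j']) I) :
    sp.Nlook j (sp.st w) I = none := by
  unfold Nlook
  rw [dif_neg]
  rintro ⟨jj, v, hstv, hgv⟩
  have htr := sibling_transfer hreg.1 hstv hgv
  have heq := geom_unique hd hreg hg htr
  exact hww ((append_single_inj heq).1).symm

lemma Fplook_eq_some (hd : 2 ≤ d) {sp : BSpec d b S} (hreg : sp.Regular)
    {w w' : List (Fin b)} {j j' : Fin b} {I J : Set ℕ}
    (hJ : sp.GeomNbr w w' J) (hg : sp.GeomNbr (w ++ [j]) (w' ++ [j']) I) :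
    sp.Fplook j (sp.st w) I = some J := by
  have hex : ∃ JJ : Set ℕ, ∃ (v v' : List (Fin b)) (jj : Fin b),
      sp.st v = sp.st w ∧ sp.GeomNbr v v' JJ ∧
        sp.GeomNbr (v ++ [j]) (v' ++ [jj]) I := ⟨J, w, w', j', rfl, hJ, hg⟩
  unfold Fplook
  rw [dif_pos hex]
  obtain ⟨u, u', ju, hstu, hgu, hguc⟩ := hex.choose_spec
  have h1 : hex.choose = sp.Jform u j I := J_formula hd hreg hgu hguc
  have h2 : sp.Jform u j I = sp.Jform w j I := Jform_invariant hreg.1 hstu j I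
  have h3 : J = sp.Jform w j I := J_formula hd hreg hJ hg
  rw [h1, h2, ← h3]

lemma Omlook_eq_some (hd : 2 ≤ d) {sp : BSpec d b S} (hreg : sp.Regular)
    {w w' : List (Fin b)} {j jy : Fin b} {I J : Set ℕ}
    (hJ : sp.GeomNbr w w' J) (hg : sp.GeomNbr (w ++ [j]) (w' ++ [jy]) I) :
    sp.Omlook j (sp.st w) (sp.st w') I = some jy := by
  have hex : ∃ jj : Fin b, ∃ (v v' : List (Fin b)) (JJ : Set ℕ),
      sp.st v = sp.st w ∧ sp.st v' = sp.st w' ∧ sp.GeomNbr v v' JJ ∧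
        sp.GeomNbr (v ++ [j]) (v' ++ [jj]) I := ⟨jy, w, w', J, rfl, rfl, hJ, hg⟩
  unfold Omlook
  rw [dif_pos hex]
  obtain ⟨v, v', J₀, hstv, hstv', hgJ₀, hgc⟩ := hex.choose_spec
  have h1 : J₀ = sp.Jform v j I := J_formula hd hreg hgJ₀ hgc
  have h2 : J = sp.Jform w j I := J_formula hd hreg hJ hg
  have h3 : sp.Jform v j I = sp.Jform w j I := Jform_invariant hreg.1 hstv j I
  have hJ0 : J₀ = J := by rw [h1, h3, ← h2]
  rw [hJ0] at hgJ₀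
  obtain ⟨τ, hτ1, hτ2⟩ := hreg.2.1 v v' w w' J hgJ₀ hJ hstv hstv'
  have hch1 := simby_child hstv hτ1 j
  have hch2 := simby_child hstv' hτ2 hex.choose
  have htr := geom_transfer hch1 hch2 (by simp [hJ.1]) (by simp) hgc
  have heq := geom_unique hd hreg hg htr
  obtain ⟨-, h4⟩ := append_single_inj heq
  rw [h4]

lemma Nlook_spec (hd : 2 ≤ d) {sp : BSpec d b S} (hreg : sp.Regular)
    {w : List (Fin b)} {j jy : Fin b} {I : Set ℕ}
    (h : sp.Nlook j (sp.st w) I = some jy) :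
    sp.GeomNbr (w ++ [j]) (w ++ [jy]) I := by
  unfold Nlook at h
  split_ifs at h with hex
  obtain ⟨v, hstv, hgv⟩ := hex.choose_spec
  have htr := sibling_transfer hreg.1 hstv hgv
  rwa [Option.some_inj.mp h] at htr

lemma Omlook_spec (hd : 2 ≤ d) {sp : BSpec d b S} (hreg : sp.Regular)
    {w w' : List (Fin b)} {j jy : Fin b} {I J : Set ℕ}
    (hJw : sp.GeomNbr w w' J) (hFp : sp.Fplook j (sp.st w) I = some J)
    (hOm : sp.Omlook j (sp.st w) (sp.st w') I = some jy) :
    sp.GeomNbr (w ++ [j]) (w' ++ [jy]) I := by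
  unfold Fplook at hFp
  split_ifs at hFp with hexF
  obtain ⟨u, u', ju, hstu, hgu, hguc⟩ := hexF.choose_spec
  have hJformula : J = sp.Jform w j I := by
    have h1 : hexF.choose = sp.Jform u j I := J_formula hd hreg hgu hguc
    have h2 := Jform_invariant hreg.1 hstu j I
    have h3 : hexF.choose = J := Option.some_inj.mp hFp
    rw [← h3, h1, h2]
  unfold Omlook at hOm
  split_ifs at hOm with hexO
  obtain ⟨v, v', J₀, hstv, hstv', hgJ₀, hgc⟩ := hexO.choose_spec
  have hchoose : hexO.choose = jy := Option.some_inj.mp hOm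
  have h1 : J₀ = sp.Jform v j I := J_formula hd hreg hgJ₀ hgc
  have h3 : sp.Jform v j I = sp.Jform w j I := Jform_invariant hreg.1 hstv j I
  have hJ0 : J₀ = J := by rw [h1, h3, ← hJformula]
  rw [hJ0] at hgJ₀
  obtain ⟨τ, hτ1, hτ2⟩ := hreg.2.1 v v' w w' J hgJ₀ hJw hstv hstv'
  have hch1 := simby_child hstv hτ1 j
  have hch2 := simby_child hstv' hτ2 hexO.choose
  have htr := geom_transfer hch1 hch2 (by simp [hJw.1]) (by simp) hgc
  rwa [hchoose] at htr

end BSpec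
end Aux8

theorem geometric_iff_algebraic_neighbor {d b : ℕ} (hd : 2 ≤ d) (hb : 2 ≤ b)
    {S : Type} [Finite S] (sp : BSpec d b S) (hreg : sp.Regular) :
    ∀ (x y : List (Fin b)) (I : Set ℕ),
      sp.GeomNbr x y I ↔ ∃ k : ℕ, 1 ≤ k ∧ sp.AlgNbr k I x y := by
  have backward : ∀ (k : ℕ) (I : Set ℕ) (x y : List (Fin b)),
      sp.AlgNbr k I x y → sp.GeomNbr x y I := by
    intro k
    induction k with
    | zero => intro I x y h; exact absurd h (by simp [BSpec.AlgNbr])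
    | succ k ih =>
      intro I x y h
      match k, ih, h with
      | 0, ih, h =>
        obtain ⟨jx, jy, hgx, hgy, hdrop, hN⟩ := h
        have hgeo := sp.Nlook_spec hd hreg hN
        have hex := eq_parent_of_getLast? hgx
        have hey : y = x.dropLast ++ [jy] := by
          rw [← hdrop]
          exact eq_parent_of_getLast? hgy
        rwa [← hex, ← hey] at hgeo
      | (m+1), ih, h =>
        obtain ⟨jx, jy, hgx, hgy, hNnone, J, hFp, hAlg, hOm⟩ := h
        have hgeoP : sp.GeomNbr x.dropLast y.dropLast J :=
          ih J x.dropLast y.dropLast hAlg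
        have hgeo := sp.Omlook_spec hd hreg hgeoP hFp hOm
        have hex := eq_parent_of_getLast? hgx
        have hey := eq_parent_of_getLast? hgy
        rwa [← hex, ← hey] at hgeo
  have forward : ∀ (n : ℕ) (x y : List (Fin b)) (I : Set ℕ), x.length = n →
      sp.GeomNbr x y I → ∃ k : ℕ, 1 ≤ k ∧ sp.AlgNbr k I x y := by
    intro n
    induction n using Nat.strong_induction_on with
    | _ n ihn =>
      intro x y I hlen hg
      have hxne : x ≠ [] := hg.2.1
      have hyne : y ≠ [] := by
        intro hy
        have hl := hg.1
        rw [hy] at hl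
        simp only [List.length_nil] at hl
        exact hxne (List.length_eq_zero_iff.mp hl)
      have hex : x = x.dropLast ++ [x.getLast hxne] :=
        (List.dropLast_append_getLast hxne).symm
      have hey : y = y.dropLast ++ [y.getLast hyne] :=
        (List.dropLast_append_getLast hyne).symm
      have hgx : x.getLast? = some (x.getLast hxne) := List.getLast?_eq_getLast hxne
      have hgy : y.getLast? = some (y.getLast hyne) := List.getLast?_eq_getLast hyne
      have hg' : sp.GeomNbr (x.dropLast ++ [x.getLast hxne])
          (y.dropLast ++ [y.getLast hyne]) I := by
        rw [← hex, ← hey]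
        exact hg
      by_cases hww : y.dropLast = x.dropLast
      · refine ⟨1, le_refl 1, ?_⟩
        refine ⟨x.getLast hxne, y.getLast hyne, hgx, hgy, hww, ?_⟩
        rw [hww] at hg'
        exact sp.Nlook_eq_some hd hreg hg'
      · rcases sp.parent_geom hd hreg hg' with heq | ⟨J, hJ⟩
        · exact absurd heq.symm hww
        have hlt : x.dropLast.length < n := by
          have h1 : x.dropLast.length = x.length - 1 := List.length_dropLast
          have h2 : 0 < x.length := List.length_pos_iff.mpr hxne
          omega
        obtain ⟨k', hk1, hAlg⟩ := ihn x.dropLast.length hlt x.dropLast y.dropLast J rfl hJ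
        obtain ⟨m, rfl⟩ : ∃ m, k' = m + 1 := ⟨k' - 1, by omega⟩
        refine ⟨m + 2, by omega, ?_⟩
        refine ⟨x.getLast hxne, y.getLast hyne, hgx, hgy, ?_, J, ?_, hAlg, ?_⟩
        · exact sp.Nlook_eq_none hd hreg (fun h => hww h.symm) hg'
        · exact sp.Fplook_eq_some hd hreg hJ hg'
        · exact sp.Omlook_eq_some hd hreg hJ hg'
  intro x y I
  constructor
  · intro hg
    exact forward x.length x y I rfl hg
  · rintro ⟨k, hk1, hAlg⟩
    exact backward k I x y hAlg
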